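/- arXiv:2406.07891 — 2 statements merged into one kernel-verified Lean document; each statement's English description precedes it below -/
import Mathlib

section
/- Fix a partition 0 = t_0 < t_1 < ⋯ < t_N = 1 of [0,1]; for an integrable function g on (0,1) let m_j(g) = (t_j − t_{j−1})^{−1} ∫_{t_{j−1}}^{t_j} g denote its mean over the j-th subinterval. Let f : [0,1] → ℝ be continuous, let M be a constant with 0 ≤ M < π², set c₂ = 1 − M/π², and let w : (0,1) → ℝ be measurable with |w(x)| ≤ M for almost every x. Let u : ℝ → ℝ be continuously differentiable on [0,1] with u(0) = u(1) = 0 such that on each open subinterval (t_{j−1}, t_j) the function u is twice differentiable and satisfies −u″(x) + m_j(w) · m_j(u) = f(x). Then (∫_0^1 u′(x)² dx)^{1/2} ≤ ‖f‖_{L²(0,1)} / c₂ and sup_{x ∈ [0,1]} |u(x)| ≤ ‖f‖_{L²(0,1)} / (2 c₂). -/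
open MeasureTheory Real

open intervalIntegral Set Topology Filter


/-- Cauchy–Schwarz with constant 1. -/
lemma cs_const {a b : ℝ} (hab : a ≤ b) {g : ℝ → ℝ}
    (hg : ContinuousOn g (Set.Icc a b)) :
    (∫ x in a..b, g x) ^ 2 ≤ (b - a) * ∫ x in a..b, g x ^ 2 := by
  rcases eq_or_lt_of_le hab with rfl | hab'
  · simp
  have hgi : IntervalIntegrable g volume a b := hg.intervalIntegrable_of_Icc hab
  have hg2i : IntervalIntegrable (fun x => g x ^ 2) volume a b :=
    (hg.pow 2).intervalIntegrable_of_Icc hab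
  set α : ℝ := (∫ x in a..b, g x) / (b - a) with hα
  have key : ∫ x in a..b, (2 * α * g x) ≤ ∫ x in a..b, (g x ^ 2 + α ^ 2) := by
    apply intervalIntegral.integral_mono_on hab (hgi.const_mul _)
      (hg2i.add (intervalIntegrable_const))
    intro x _
    nlinarith [sq_nonneg (g x - α)]
  rw [intervalIntegral.integral_const_mul, intervalIntegral.integral_add hg2i
    intervalIntegrable_const, intervalIntegral.integral_const] at key
  have hba : (0:ℝ) < b - a := by linarith
  rw [hα] at key
  have h2 : 2 * ((∫ x in a..b, g x) / (b - a)) * (∫ x in a..b, g x)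
      = 2 * (∫ x in a..b, g x) ^ 2 / (b - a) := by ring
  rw [smul_eq_mul] at key
  have key2 := mul_le_mul_of_nonneg_right key hba.le
  have e1 : 2 * ((∫ x in a..b, g x) / (b - a)) * (∫ x in a..b, g x) * (b - a)
      = 2 * (∫ x in a..b, g x) ^ 2 := by field_simp
  have e2 : ((∫ x in a..b, g x ^ 2) + (b - a) * ((∫ x in a..b, g x) / (b - a)) ^ 2) * (b - a)
      = (∫ x in a..b, g x ^ 2) * (b - a) + (∫ x in a..b, g x) ^ 2 := by
    field_simp
  rw [e1, e2] at key2
  linarith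


lemma poincare {u u' : ℝ → ℝ}
    (hu : ∀ x ∈ Set.Icc (0:ℝ) 1, HasDerivAt u (u' x) x)
    (hu'c : ContinuousOn u' (Set.Icc 0 1))
    (hu0 : u 0 = 0) (hu1 : u 1 = 0) :
    π ^ 2 * ∫ x in (0:ℝ)..1, u x ^ 2 ≤ ∫ x in (0:ℝ)..1, u' x ^ 2 := by
  have huc : ContinuousOn u (Set.Icc 0 1) := fun x hx =>
    (hu x hx).continuousAt.continuousWithinAt
  -- bound on u'
  obtain ⟨C, hC⟩ := isCompact_Icc.exists_bound_of_continuousOn hu'c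
  set K : ℝ := max C 0 with hKdef
  have hK0 : 0 ≤ K := le_max_right _ _
  have hK : ∀ x ∈ Set.Icc (0:ℝ) 1, |u' x| ≤ K := fun x hx =>
    (hC x hx).trans (le_max_left _ _)
  -- FTC consequences
  have hftc : ∀ x ∈ Set.Icc (0:ℝ) 1, ∀ y ∈ Set.Icc (0:ℝ) 1,
      u y - u x = ∫ z in x..y, u' z := by
    intro x hx y hy
    rw [integral_eq_sub_of_hasDerivAt (f := u) (f' := u')]
    · intro z hz
      exact hu z (uIcc_subset_Icc hx hy hz)
    · exact (hu'c.mono (uIcc_subset_Icc hx hy)).intervalIntegrable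
  have hb0 : ∀ x ∈ Set.Icc (0:ℝ) 1, |u x| ≤ K * x := by
    intro x hx
    have := hftc 0 (by norm_num) x hx
    rw [hu0, sub_zero] at this
    rw [this]
    have := intervalIntegral.norm_integral_le_of_norm_le_const
      (C := K) (f := u') (a := 0) (b := x) (fun z hz => by
        exact hK z (uIcc_subset_Icc (by norm_num) hx (uIoc_subset_uIcc hz)))
    simpa [abs_of_nonneg hx.1] using this
  have hb1 : ∀ x ∈ Set.Icc (0:ℝ) 1, |u x| ≤ K * (1 - x) := by
    intro x hx
    have h := hftc 1 (by norm_num) x hx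
    rw [hu1, sub_zero] at h
    rw [h]
    have := intervalIntegral.norm_integral_le_of_norm_le_const
      (C := K) (f := u') (a := 1) (b := x) (fun z hz => by
        exact hK z (uIcc_subset_Icc (by norm_num) hx (uIoc_subset_uIcc hz)))
    calc ‖∫ z in (1:ℝ)..x, u' z‖ ≤ K * |x - 1| := this
      _ = K * (1 - x) := by rw [abs_of_nonpos (by linarith [hx.2])]; ring
  -- the auxiliary function φ = π cot(πx)
  set φ : ℝ → ℝ := fun x => π * Real.cos (π * x) / Real.sin (π * x) with hφdef
  have hsin : ∀ x ∈ Set.Ioo (0:ℝ) 1, 0 < Real.sin (π * x) := by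
    intro x hx
    apply Real.sin_pos_of_pos_of_lt_pi (mul_pos pi_pos hx.1)
    nlinarith [pi_pos, hx.2]
  have hφd : ∀ x ∈ Set.Ioo (0:ℝ) 1, HasDerivAt φ (-π ^ 2 - φ x ^ 2) x := by
    intro x hx
    have hne := (hsin x hx).ne'
    have hid : HasDerivAt (fun y : ℝ => π * y) π x := by
      simpa using (hasDerivAt_id x).const_mul π
    have hc : HasDerivAt (fun y : ℝ => π * Real.cos (π * y))
        (π * (-Real.sin (π * x) * π)) x := (hid.cos).const_mul π
    have hs : HasDerivAt (fun y : ℝ => Real.sin (π * y))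
        (Real.cos (π * x) * π) x := hid.sin
    have := hc.div hs hne
    refine this.congr_deriv ?_
    rw [hφdef]
    field_simp
  -- the key inequality for small ε
  have key : ∀ ε ∈ Set.Ioc (0:ℝ) (1/2),
      π ^ 2 * ((∫ x in (0:ℝ)..(1-ε), u x ^ 2) - ∫ x in (0:ℝ)..ε, u x ^ 2)
        ≤ (∫ x in (0:ℝ)..1, u' x ^ 2) + 2 * K ^ 2 * ε := by
    intro ε hε
    obtain ⟨hε0, hεh⟩ := hε
    have hle : ε ≤ 1 - ε := by linarith
    have hsub : Set.Icc ε (1-ε) ⊆ Set.Ioo 0 1 := fun z hz =>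
      ⟨lt_of_lt_of_le hε0 hz.1, lt_of_le_of_lt hz.2 (by linarith)⟩
    have hsub' : Set.Icc ε (1-ε) ⊆ Set.Icc 0 1 := hsub.trans Set.Ioo_subset_Icc_self
    have hφc : ContinuousOn φ (Set.Icc ε (1-ε)) := by
      apply ContinuousOn.div
      · exact (continuous_const.mul (Real.continuous_cos.comp
          (continuous_const.mul continuous_id))).continuousOn
      · exact (Real.continuous_sin.comp (continuous_const.mul continuous_id)).continuousOn
      · exact fun z hz => (hsin z (hsub hz)).ne'
    have cu : ContinuousOn u (Set.Icc ε (1-ε)) := huc.mono hsub'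
    have cu' : ContinuousOn u' (Set.Icc ε (1-ε)) := hu'c.mono hsub'
    -- derivative of G := φ * u^2
    have hGd : ∀ x ∈ Set.Icc ε (1-ε), HasDerivAt (fun y => φ y * u y ^ 2)
        ((u' x ^ 2 - π ^ 2 * u x ^ 2) - (u' x - φ x * u x) ^ 2) x := by
      intro x hx
      have h2 : HasDerivAt (fun y => u y ^ 2) (2 * u x ^ 1 * u' x) x :=
        (hu x (hsub' hx)).pow 2
      have := (hφd x (hsub hx)).mul h2
      refine this.congr_deriv ?_
      ring
    have hintB : IntervalIntegrable (fun x => (u' x - φ x * u x) ^ 2) volume ε (1-ε) := by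
      apply ContinuousOn.intervalIntegrable
      rw [Set.uIcc_of_le hle]
      exact (cu'.sub (hφc.mul cu)).pow 2
    have hintu'2 : IntervalIntegrable (fun x => u' x ^ 2) volume ε (1-ε) := by
      apply ContinuousOn.intervalIntegrable
      rw [Set.uIcc_of_le hle]
      exact cu'.pow 2
    have hintu2 : IntervalIntegrable (fun x => π ^ 2 * u x ^ 2) volume ε (1-ε) := by
      apply ContinuousOn.intervalIntegrable
      rw [Set.uIcc_of_le hle]
      exact continuousOn_const.mul (cu.pow 2)
    have hintA : IntervalIntegrable (fun x => u' x ^ 2 - π ^ 2 * u x ^ 2) volume ε (1-ε) :=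
      hintu'2.sub hintu2
    have hftc2 := integral_eq_sub_of_hasDerivAt
      (f := fun y => φ y * u y ^ 2)
      (f' := fun x => (u' x ^ 2 - π ^ 2 * u x ^ 2) - (u' x - φ x * u x) ^ 2)
      (fun x hx => hGd x (by rwa [Set.uIcc_of_le hle] at hx)) (hintA.sub hintB)
    rw [intervalIntegral.integral_sub hintA hintB] at hftc2
    have hBnn : 0 ≤ ∫ x in ε..(1-ε), (u' x - φ x * u x) ^ 2 :=
      intervalIntegral.integral_nonneg hle (fun x _ => sq_nonneg _)
    -- bounds on φ at ε
    have hsinε : 0 < Real.sin (π * ε) := hsin ε ⟨hε0, by linarith⟩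
    have hcosε : 0 ≤ Real.cos (π * ε) := by
      apply Real.cos_nonneg_of_mem_Icc
      constructor
      · nlinarith [pi_pos, hε0]
      · nlinarith [pi_pos]
    have hφε0 : 0 ≤ φ ε := div_nonneg (mul_nonneg pi_pos.le hcosε) hsinε.le
    have hφεle : φ ε ≤ 1 / ε := by
      rw [hφdef]
      rw [div_le_div_iff₀ hsinε hε0]
      rcases lt_or_eq_of_le hεh with h | h
      · have hy0 : 0 < π * ε := mul_pos pi_pos hε0
        have hy2 : π * ε < π / 2 := by nlinarith [pi_pos]
        have hcpos : 0 < Real.cos (π * ε) := Real.cos_pos_of_mem_Ioo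
          ⟨by nlinarith [pi_pos], hy2⟩
        have := Real.lt_tan hy0 hy2
        rw [Real.tan_eq_sin_div_cos, lt_div_iff₀ hcpos] at this
        nlinarith
      · subst h
        rw [show π * (1/2:ℝ) = π/2 by ring, Real.cos_pi_div_two, Real.sin_pi_div_two]
        norm_num
    have hu2a : u ε ^ 2 ≤ (K * ε) ^ 2 := by
      have h := hb0 ε ⟨hε0.le, by linarith⟩
      nlinarith [abs_nonneg (u ε), sq_abs (u ε)]
    have hu2b : u (1-ε) ^ 2 ≤ (K * ε) ^ 2 := by
      have h := hb1 (1-ε) ⟨by linarith, by linarith⟩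
      rw [show (1:ℝ) - (1-ε) = ε by ring] at h
      nlinarith [abs_nonneg (u (1-ε)), sq_abs (u (1-ε))]
    have hmulb : φ ε * u (1-ε) ^ 2 ≤ K ^ 2 * ε := by
      calc φ ε * u (1-ε) ^ 2 ≤ (1/ε) * (K * ε) ^ 2 :=
            mul_le_mul hφεle hu2b (sq_nonneg _) (by positivity)
        _ = K ^ 2 * ε := by field_simp
    have hmula : φ ε * u ε ^ 2 ≤ K ^ 2 * ε := by
      calc φ ε * u ε ^ 2 ≤ (1/ε) * (K * ε) ^ 2 :=
            mul_le_mul hφεle hu2a (sq_nonneg _) (by positivity)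
        _ = K ^ 2 * ε := by field_simp
    have hφsym : φ (1-ε) = -φ ε := by
      rw [hφdef]
      simp only
      rw [show π * (1-ε) = π - π * ε by ring, Real.cos_pi_sub, Real.sin_pi_sub]
      ring
    have hGbound : -(2 * K ^ 2 * ε) ≤ (fun y => φ y * u y ^ 2) (1-ε)
        - (fun y => φ y * u y ^ 2) ε := by
      simp only
      rw [hφsym]
      have h0 : 0 ≤ φ ε * u ε ^ 2 := mul_nonneg hφε0 (sq_nonneg _)
      nlinarith
    -- splitting integrals
    have hsplitA : ∫ x in ε..(1-ε), (u' x ^ 2 - π ^ 2 * u x ^ 2)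
        = (∫ x in ε..(1-ε), u' x ^ 2) - π ^ 2 * ∫ x in ε..(1-ε), u x ^ 2 := by
      rw [intervalIntegral.integral_sub hintu'2 hintu2, intervalIntegral.integral_const_mul]
    have i1 : IntervalIntegrable (fun x => u' x ^ 2) volume 0 ε := by
      apply ContinuousOn.intervalIntegrable
      apply (hu'c.pow 2).mono
      rw [Set.uIcc_of_le hε0.le]
      exact Set.Icc_subset_Icc le_rfl (by linarith)
    have i3 : IntervalIntegrable (fun x => u' x ^ 2) volume (1-ε) 1 := by
      apply ContinuousOn.intervalIntegrable
      apply (hu'c.pow 2).mono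
      rw [Set.uIcc_of_le (by linarith : (1:ℝ)-ε ≤ 1)]
      exact Set.Icc_subset_Icc (by linarith) le_rfl
    have e1 := intervalIntegral.integral_add_adjacent_intervals i1 hintu'2
    have e2 := intervalIntegral.integral_add_adjacent_intervals (i1.trans hintu'2) i3
    have n1 : 0 ≤ ∫ x in (0:ℝ)..ε, u' x ^ 2 :=
      intervalIntegral.integral_nonneg hε0.le (fun x _ => sq_nonneg _)
    have n3 : 0 ≤ ∫ x in (1-ε)..1, u' x ^ 2 :=
      intervalIntegral.integral_nonneg (by linarith) (fun x _ => sq_nonneg _)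
    -- u^2 splitting
    have j1 : IntervalIntegrable (fun x => u x ^ 2) volume 0 ε := by
      apply ContinuousOn.intervalIntegrable
      apply (huc.pow 2).mono
      rw [Set.uIcc_of_le hε0.le]
      exact Set.Icc_subset_Icc le_rfl (by linarith)
    have j2 : IntervalIntegrable (fun x => u x ^ 2) volume ε (1-ε) := by
      apply ContinuousOn.intervalIntegrable
      rw [Set.uIcc_of_le hle]
      exact cu.pow 2
    have e3 := intervalIntegral.integral_add_adjacent_intervals j1 j2
    -- combine
    beta_reduce at hftc2 hGbound
    have e3' : (∫ x in (0:ℝ)..(1-ε), u x ^ 2) - ∫ x in (0:ℝ)..ε, u x ^ 2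
        = ∫ x in ε..(1-ε), u x ^ 2 := by linarith [e3]
    rw [e3']
    linarith [hftc2, hBnn, hGbound, hsplitA, e1, e2, n1, n3]
  -- pass to the limit ε → 0⁺
  have hPint : IntegrableOn (fun x => u x ^ 2) (Set.uIcc 0 1) volume := by
    rw [Set.uIcc_of_le zero_le_one]
    exact (huc.pow 2).integrableOn_Icc
  have hPc : ContinuousOn (fun x => ∫ t in (0:ℝ)..x, u t ^ 2) (Set.uIcc 0 1) :=
    intervalIntegral.continuousOn_primitive_interval hPint
  rw [Set.uIcc_of_le zero_le_one] at hPc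
  have hmem : Set.Ioc (0:ℝ) (1/2) ∈ 𝓝[>] (0:ℝ) :=
    Ioc_mem_nhdsGT_of_mem ⟨le_rfl, by norm_num⟩
  have ht0 : Filter.Tendsto (fun ε : ℝ => ε) (𝓝[>] 0) (𝓝[Set.Icc (0:ℝ) 1] 0) := by
    apply tendsto_nhdsWithin_of_tendsto_nhds_of_eventually_within
    · exact Filter.tendsto_id.mono_left nhdsWithin_le_nhds
    · exact Filter.mem_of_superset hmem (fun x hx => ⟨hx.1.le, hx.2.trans (by norm_num)⟩)
  have ht0' : Filter.Tendsto (fun ε : ℝ => 1 - ε) (𝓝[>] 0) (𝓝[Set.Icc (0:ℝ) 1] 1) := by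
    apply tendsto_nhdsWithin_of_tendsto_nhds_of_eventually_within
    · have : Filter.Tendsto (fun ε : ℝ => 1 - ε) (𝓝 0) (𝓝 1) := by
        simpa using ((tendsto_const_nhds : Tendsto (fun _ : ℝ => (1:ℝ)) (𝓝 0) (𝓝 1)).sub tendsto_id)
      exact this.mono_left nhdsWithin_le_nhds
    · exact Filter.mem_of_superset hmem
        (fun x hx => ⟨by linarith [hx.2], by linarith [hx.1]⟩)
  have ht1 : Filter.Tendsto (fun ε : ℝ => ∫ t in (0:ℝ)..ε, u t ^ 2) (𝓝[>] 0)
      (𝓝 (∫ t in (0:ℝ)..(0:ℝ), u t ^ 2)) :=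
    (hPc 0 ⟨le_rfl, zero_le_one⟩).tendsto.comp ht0
  have ht2 : Filter.Tendsto (fun ε : ℝ => ∫ t in (0:ℝ)..(1-ε), u t ^ 2) (𝓝[>] 0)
      (𝓝 (∫ t in (0:ℝ)..(1:ℝ), u t ^ 2)) :=
    (hPc 1 ⟨zero_le_one, le_rfl⟩).tendsto.comp ht0'
  have hlim1 : Filter.Tendsto
      (fun ε : ℝ => π ^ 2 * ((∫ t in (0:ℝ)..(1-ε), u t ^ 2) - ∫ t in (0:ℝ)..ε, u t ^ 2))
      (𝓝[>] 0) (𝓝 (π ^ 2 * ∫ t in (0:ℝ)..(1:ℝ), u t ^ 2)) := by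
    have := (ht2.sub ht1).const_mul (π ^ 2)
    simpa using this
  have hlim2 : Filter.Tendsto
      (fun ε : ℝ => (∫ x in (0:ℝ)..1, u' x ^ 2) + 2 * K ^ 2 * ε)
      (𝓝[>] 0) (𝓝 (∫ x in (0:ℝ)..1, u' x ^ 2)) := by
    have : Filter.Tendsto (fun ε : ℝ => (∫ x in (0:ℝ)..1, u' x ^ 2) + 2 * K ^ 2 * ε)
        (𝓝 (0:ℝ)) (𝓝 ((∫ x in (0:ℝ)..1, u' x ^ 2) + 2 * K ^ 2 * 0)) := by
      exact (continuous_const.add (continuous_const.mul continuous_id)).tendsto 0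
    simpa using this.mono_left nhdsWithin_le_nhds
  exact le_of_tendsto_of_tendsto hlim1 hlim2
    (Filter.eventually_iff_exists_mem.2 ⟨_, hmem, fun ε hε => key ε hε⟩)

/-- The mean value of `g` over the `j`-th subinterval `(t (j-1), t j)`. -/
noncomputable def cellMean (t : ℕ → ℝ) (j : ℕ) (g : ℝ → ℝ) : ℝ :=
  (t j - t (j - 1))⁻¹ * ∫ x in (t (j - 1))..(t j), g x

set_option maxHeartbeats 2000000 in
theorem apriori_bounds_averaged_pde
    (N : ℕ) (hN : 1 ≤ N) (t : ℕ → ℝ)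
    (ht0 : t 0 = 0) (htN : t N = 1) (hmono : ∀ i < N, t i < t (i + 1))
    (f : ℝ → ℝ) (hfc : ContinuousOn f (Set.Icc 0 1))
    (M : ℝ) (hM0 : 0 ≤ M) (hMpi : M < π ^ 2)
    (w : ℝ → ℝ) (hwm : Measurable w)
    (hwb : ∀ᵐ x ∂(volume.restrict (Set.Ioo (0:ℝ) 1)), |w x| ≤ M)
    (u u' u'' : ℝ → ℝ)
    (hu : ∀ x ∈ Set.Icc (0:ℝ) 1, HasDerivAt u (u' x) x)
    (hu'c : ContinuousOn u' (Set.Icc 0 1))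
    (hu0 : u 0 = 0) (hu1 : u 1 = 0)
    (hode : ∀ j ∈ Finset.Icc 1 N, ∀ x ∈ Set.Ioo (t (j - 1)) (t j),
      HasDerivAt u' (u'' x) x ∧
      -u'' x + cellMean t j w * cellMean t j u = f x) :
    Real.sqrt (∫ x in (0:ℝ)..1, u' x ^ 2) ≤
      Real.sqrt (∫ x in (0:ℝ)..1, f x ^ 2) / (1 - M / π ^ 2) ∧
    ∀ x ∈ Set.Icc (0:ℝ) 1,
      |u x| ≤ Real.sqrt (∫ x in (0:ℝ)..1, f x ^ 2) / (2 * (1 - M / π ^ 2)) := by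
  have hπ2 : (0:ℝ) < π ^ 2 := by positivity
  obtain ⟨c₂, hc₂def⟩ : ∃ c₂ : ℝ, c₂ = 1 - M / π ^ 2 := ⟨_, rfl⟩
  rw [← hc₂def]
  have hc₂ : 0 < c₂ := by
    have : M / π ^ 2 < 1 := (div_lt_one hπ2).2 hMpi
    rw [hc₂def]; linarith
  have huc : ContinuousOn u (Set.Icc 0 1) := fun x hx =>
    (hu x hx).continuousAt.continuousWithinAt
  -- monotonicity of the partition
  have htmono : ∀ j ≤ N, ∀ i ≤ j, t i ≤ t j := by
    intro j
    induction j with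
    | zero => intro _ i hi; rw [Nat.le_zero.mp hi]
    | succ n ih =>
      intro hn i hi
      rcases Nat.eq_or_lt_of_le hi with rfl | h
      · exact le_rfl
      · exact (ih (by omega) i (by omega)).trans (hmono n (by omega)).le
  have htmem : ∀ i ≤ N, t i ∈ Set.Icc (0:ℝ) 1 := fun i hi =>
    ⟨by rw [← ht0]; exact htmono i hi 0 (Nat.zero_le _),
     by rw [← htN]; exact htmono N le_rfl i hi⟩
  have hcellsub : ∀ i < N, Set.Icc (t i) (t (i+1)) ⊆ Set.Icc (0:ℝ) 1 := fun i hi =>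
    Set.Icc_subset_Icc (htmem i hi.le).1 (htmem (i+1) hi).2
  -- FTC for u
  have hftc : ∀ x ∈ Set.Icc (0:ℝ) 1, ∀ y ∈ Set.Icc (0:ℝ) 1,
      u y - u x = ∫ z in x..y, u' z := by
    intro x hx y hy
    rw [integral_eq_sub_of_hasDerivAt (f := u) (f' := u')]
    · intro z hz
      exact hu z (uIcc_subset_Icc hx hy hz)
    · exact (hu'c.mono (uIcc_subset_Icc hx hy)).intervalIntegrable
  -- cell energy identities
  have hcell : ∀ i < N, (∫ x in t i..t (i+1), u' x ^ 2)
      + (cellMean t (i+1) w * cellMean t (i+1) u) * (∫ x in t i..t (i+1), u x)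
      - (∫ x in t i..t (i+1), f x * u x)
      = u' (t (i+1)) * u (t (i+1)) - u' (t i) * u (t i) := by
    intro i hi
    have hab : t i < t (i+1) := hmono i hi
    have hsub := hcellsub i hi
    have hj : (i+1) ∈ Finset.Icc 1 N := by simp [Finset.mem_Icc]; omega
    set c : ℝ := cellMean t (i+1) w * cellMean t (i+1) u with hcdef
    have hderiv : ∀ x ∈ Set.Ioo (t i) (t (i+1)), HasDerivWithinAt (fun y => u' y * u y)
        (u' x ^ 2 + (c - f x) * u x) (Set.Ioi x) x := by
      intro x hx
      have hx01 : x ∈ Set.Icc (0:ℝ) 1 := hsub (Set.Ioo_subset_Icc_self hx)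
      obtain ⟨hd, heq⟩ := hode (i+1) hj x (by rw [Nat.add_sub_cancel]; exact hx)
      have hu'' : u'' x = c - f x := by
        rw [hcdef]; linarith
      have hprod := hd.mul (hu x hx01)
      have : HasDerivAt (fun y => u' y * u y) (u' x ^ 2 + (c - f x) * u x) x := by
        refine hprod.congr_deriv ?_
        rw [hu'']; ring
      exact this.hasDerivWithinAt
    have hcont : ContinuousOn (fun y => u' y * u y) (Set.Icc (t i) (t (i+1))) :=
      (hu'c.mono hsub).mul (huc.mono hsub)
    have hint : IntervalIntegrable (fun x => u' x ^ 2 + (c - f x) * u x)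
        volume (t i) (t (i+1)) := by
      apply ContinuousOn.intervalIntegrable
      rw [Set.uIcc_of_le hab.le]
      exact (((hu'c.mono hsub).pow 2).add
        ((continuousOn_const.sub (hfc.mono hsub)).mul (huc.mono hsub)))
    have hmain := integral_eq_sub_of_hasDeriv_right_of_le hab.le hcont hderiv hint
    have hiu'2 : IntervalIntegrable (fun x => u' x ^ 2) volume (t i) (t (i+1)) := by
      apply ContinuousOn.intervalIntegrable
      rw [Set.uIcc_of_le hab.le]; exact (hu'c.mono hsub).pow 2
    have hiu : IntervalIntegrable u volume (t i) (t (i+1)) := by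
      apply ContinuousOn.intervalIntegrable
      rw [Set.uIcc_of_le hab.le]; exact huc.mono hsub
    have hifu : IntervalIntegrable (fun x => f x * u x) volume (t i) (t (i+1)) := by
      apply ContinuousOn.intervalIntegrable
      rw [Set.uIcc_of_le hab.le]; exact (hfc.mono hsub).mul (huc.mono hsub)
    have hsplit : ∫ x in t i..t (i+1), (u' x ^ 2 + (c - f x) * u x)
        = (∫ x in t i..t (i+1), u' x ^ 2) + (c * ∫ x in t i..t (i+1), u x)
          - ∫ x in t i..t (i+1), f x * u x := by
      have e : ∀ x, u' x ^ 2 + (c - f x) * u x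
          = (u' x ^ 2 + c * u x) - f x * u x := fun x => by ring
      rw [intervalIntegral.integral_congr (g := fun x => (u' x ^ 2 + c * u x) - f x * u x)
        (fun x _ => e x)]
      rw [intervalIntegral.integral_sub (hiu'2.add (hiu.const_mul c)) hifu,
        intervalIntegral.integral_add hiu'2 (hiu.const_mul c),
        intervalIntegral.integral_const_mul]
    rw [hsplit] at hmain
    linarith [hmain]
  -- integrability on cells
  have hiu'2 : ∀ i < N, IntervalIntegrable (fun x => u' x ^ 2) volume (t i) (t (i+1)) := by
    intro i hi
    apply ContinuousOn.intervalIntegrable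
    rw [Set.uIcc_of_le (hmono i hi).le]; exact (hu'c.mono (hcellsub i hi)).pow 2
  have hiu2 : ∀ i < N, IntervalIntegrable (fun x => u x ^ 2) volume (t i) (t (i+1)) := by
    intro i hi
    apply ContinuousOn.intervalIntegrable
    rw [Set.uIcc_of_le (hmono i hi).le]; exact (huc.mono (hcellsub i hi)).pow 2
  have hifu : ∀ i < N, IntervalIntegrable (fun x => f x * u x) volume (t i) (t (i+1)) := by
    intro i hi
    apply ContinuousOn.intervalIntegrable
    rw [Set.uIcc_of_le (hmono i hi).le]
    exact (hfc.mono (hcellsub i hi)).mul (huc.mono (hcellsub i hi))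
  -- sums of integrals over the cells
  have hsum1 : ∑ i ∈ Finset.range N, ∫ x in t i..t (i+1), u' x ^ 2
      = ∫ x in (0:ℝ)..1, u' x ^ 2 := by
    have := intervalIntegral.sum_integral_adjacent_intervals
      (a := t) (n := N) (fun i hi => hiu'2 i hi)
    rwa [ht0, htN] at this
  have hsum2 : ∑ i ∈ Finset.range N, ∫ x in t i..t (i+1), u x ^ 2
      = ∫ x in (0:ℝ)..1, u x ^ 2 := by
    have := intervalIntegral.sum_integral_adjacent_intervals
      (a := t) (n := N) (fun i hi => hiu2 i hi)
    rwa [ht0, htN] at this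
  have hsum3 : ∑ i ∈ Finset.range N, ∫ x in t i..t (i+1), f x * u x
      = ∫ x in (0:ℝ)..1, f x * u x := by
    have := intervalIntegral.sum_integral_adjacent_intervals
      (a := t) (n := N) (fun i hi => hifu i hi)
    rwa [ht0, htN] at this
  -- telescoping sum of the cell identities
  have htel : ∑ i ∈ Finset.range N,
      ((∫ x in t i..t (i+1), u' x ^ 2)
      + (cellMean t (i+1) w * cellMean t (i+1) u) * (∫ x in t i..t (i+1), u x)
      - (∫ x in t i..t (i+1), f x * u x)) = 0 := by
    have : ∑ i ∈ Finset.range N,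
        ((∫ x in t i..t (i+1), u' x ^ 2)
        + (cellMean t (i+1) w * cellMean t (i+1) u) * (∫ x in t i..t (i+1), u x)
        - (∫ x in t i..t (i+1), f x * u x))
        = ∑ i ∈ Finset.range N,
          (u' (t (i+1)) * u (t (i+1)) - u' (t i) * u (t i)) :=
      Finset.sum_congr rfl (fun i hi => hcell i (Finset.mem_range.mp hi))
    rw [this, Finset.sum_range_sub (fun i => u' (t i) * u (t i)) N, ht0, htN, hu0, hu1]
    ring
  -- energy identity
  have henergy : (∫ x in (0:ℝ)..1, u' x ^ 2)
      + (∑ i ∈ Finset.range N,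
        (cellMean t (i+1) w * cellMean t (i+1) u) * (∫ x in t i..t (i+1), u x))
      - (∫ x in (0:ℝ)..1, f x * u x) = 0 := by
    rw [← hsum1, ← hsum3]
    rw [← Finset.sum_add_distrib, ← Finset.sum_sub_distrib]
    exact htel
  -- lower bound for the averaged term, cell by cell
  have hcellbound : ∀ i < N,
      -(M * ∫ x in t i..t (i+1), u x ^ 2)
      ≤ (cellMean t (i+1) w * cellMean t (i+1) u) * (∫ x in t i..t (i+1), u x) := by
    intro i hi
    have hab : t i < t (i+1) := hmono i hi
    have hL : (0:ℝ) < t (i+1) - t i := by linarith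
    have hsub := hcellsub i hi
    have hIoosub : Set.Ioo (t i) (t (i+1)) ⊆ Set.Ioo (0:ℝ) 1 := fun z hz =>
      ⟨lt_of_le_of_lt (htmem i hi.le).1 hz.1, lt_of_lt_of_le hz.2 (htmem (i+1) hi).2⟩
    -- |cellMean w| ≤ M
    have hwB : |cellMean t (i+1) w| ≤ M := by
      have hae : ∀ᵐ x ∂(volume.restrict (Set.Ioo (t i) (t (i+1)))), ‖w x‖ ≤ M := by
        filter_upwards [ae_restrict_of_ae_restrict_of_subset hIoosub hwb] with x hx
        simpa using hx
      have hbound := MeasureTheory.norm_setIntegral_le_of_norm_le_const_ae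
        (μ := volume) (s := Set.Ioo (t i) (t (i+1))) (f := w)
        (by rw [Real.volume_Ioo]; exact ENNReal.ofReal_lt_top) hae
      rw [Real.volume_real_Ioo_of_le hab.le] at hbound
      have hrw : ∫ x in (t i)..(t (i+1)), w x
          = ∫ x in Set.Ioo (t i) (t (i+1)), w x := by
        rw [intervalIntegral.integral_of_le hab.le, MeasureTheory.integral_Ioc_eq_integral_Ioo]
      have : cellMean t (i+1) w = (t (i+1) - t i)⁻¹ * ∫ x in Set.Ioo (t i) (t (i+1)), w x := by
        rw [cellMean, Nat.add_sub_cancel, hrw]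
      rw [this, abs_mul, abs_inv, abs_of_pos hL]
      rw [inv_mul_le_iff₀ hL]
      calc |∫ x in Set.Ioo (t i) (t (i+1)), w x| ≤ M * (t (i+1) - t i) := hbound
        _ = (t (i+1) - t i) * M := by ring
    have hcs := cs_const hab.le (huc.mono hsub)
    have hmeanu : cellMean t (i+1) u = (t (i+1) - t i)⁻¹ * ∫ x in (t i)..(t (i+1)), u x := by
      rw [cellMean, Nat.add_sub_cancel]
    have hq0 : 0 ≤ (t (i+1) - t i)⁻¹ * (∫ x in (t i)..(t (i+1)), u x) ^ 2 := by positivity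
    have hqle : (t (i+1) - t i)⁻¹ * (∫ x in (t i)..(t (i+1)), u x) ^ 2
        ≤ ∫ x in (t i)..(t (i+1)), u x ^ 2 := by
      rw [inv_mul_le_iff₀ hL]
      exact hcs
    have h1 : -M ≤ cellMean t (i+1) w := (abs_le.mp hwB).1
    have h2 : (-M) * ((t (i+1) - t i)⁻¹ * (∫ x in (t i)..(t (i+1)), u x) ^ 2)
        ≤ cellMean t (i+1) w * ((t (i+1) - t i)⁻¹ * (∫ x in (t i)..(t (i+1)), u x) ^ 2) :=
      mul_le_mul_of_nonneg_right h1 hq0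
    have h3 : (cellMean t (i+1) w * cellMean t (i+1) u) * (∫ x in t i..t (i+1), u x)
        = cellMean t (i+1) w * ((t (i+1) - t i)⁻¹ * (∫ x in (t i)..(t (i+1)), u x) ^ 2) := by
      rw [hmeanu]; ring
    have h4 : -(M * ∫ x in t i..t (i+1), u x ^ 2)
        ≤ (-M) * ((t (i+1) - t i)⁻¹ * (∫ x in (t i)..(t (i+1)), u x) ^ 2) := by
      have := mul_le_mul_of_nonneg_left hqle hM0
      linarith
    rw [h3]
    linarith
  have hSbound : -(M * ∫ x in (0:ℝ)..1, u x ^ 2)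
      ≤ ∑ i ∈ Finset.range N,
        (cellMean t (i+1) w * cellMean t (i+1) u) * (∫ x in t i..t (i+1), u x) := by
    calc -(M * ∫ x in (0:ℝ)..1, u x ^ 2)
        = ∑ i ∈ Finset.range N, -(M * ∫ x in t i..t (i+1), u x ^ 2) := by
          rw [← hsum2, Finset.mul_sum, ← Finset.sum_neg_distrib]
      _ ≤ _ := Finset.sum_le_sum (fun i hi => hcellbound i (Finset.mem_range.mp hi))
  -- Young's inequality with θ = 1/(π²c₂)
  obtain ⟨θ, hθdef⟩ : ∃ θ : ℝ, θ = 1 / (π ^ 2 * c₂) := ⟨_, rfl⟩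
  have hθ : 0 < θ := by rw [hθdef]; positivity
  have hY : (∫ x in (0:ℝ)..1, f x * u x)
      ≤ θ/2 * (∫ x in (0:ℝ)..1, f x ^ 2) + 1/(2*θ) * ∫ x in (0:ℝ)..1, u x ^ 2 := by
    have hptw : ∀ x ∈ Set.Icc (0:ℝ) 1,
        f x * u x ≤ θ/2 * f x ^ 2 + 1/(2*θ) * u x ^ 2 := by
      intro x _
      have expand : 2*θ*(θ/2 * f x ^ 2 + 1/(2*θ) * u x ^ 2) = θ^2 * f x ^ 2 + u x ^ 2 := by
        field_simp
      have key2 : 2*θ*(f x * u x) ≤ 2*θ*(θ/2 * f x ^ 2 + 1/(2*θ) * u x ^ 2) := by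
        rw [expand]; nlinarith [sq_nonneg (θ * f x - u x)]
      exact le_of_mul_le_mul_left key2 (by positivity)
    have int1 : IntervalIntegrable (fun x => f x * u x) volume 0 1 :=
      ((hfc.mul huc).intervalIntegrable_of_Icc zero_le_one)
    have int2 : IntervalIntegrable (fun x => θ/2 * f x ^ 2 + 1/(2*θ) * u x ^ 2) volume 0 1 :=
      ((continuousOn_const.mul (hfc.pow 2)).add
        (continuousOn_const.mul (huc.pow 2))).intervalIntegrable_of_Icc zero_le_one
    have hmono' := intervalIntegral.integral_mono_on zero_le_one int1 int2 hptw
    have hsplit2 : ∫ x in (0:ℝ)..1, (θ/2 * f x ^ 2 + 1/(2*θ) * u x ^ 2)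
        = θ/2 * (∫ x in (0:ℝ)..1, f x ^ 2) + 1/(2*θ) * ∫ x in (0:ℝ)..1, u x ^ 2 := by
      rw [intervalIntegral.integral_add (f := fun x => θ/2 * f x ^ 2) (g := fun x => 1/(2*θ) * u x ^ 2)
          (((hfc.pow 2).intervalIntegrable_of_Icc zero_le_one).const_mul _)
          (((huc.pow 2).intervalIntegrable_of_Icc zero_le_one).const_mul _),
        intervalIntegral.integral_const_mul, intervalIntegral.integral_const_mul]
    rw [hsplit2] at hmono'
    exact hmono'
  have hpoin := poincare hu hu'c hu0 hu1
  have hIf2nn : 0 ≤ ∫ x in (0:ℝ)..1, f x ^ 2 :=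
    intervalIntegral.integral_nonneg zero_le_one (fun x _ => sq_nonneg _)
  have hIu'nn : 0 ≤ ∫ x in (0:ℝ)..1, u' x ^ 2 :=
    intervalIntegral.integral_nonneg zero_le_one (fun x _ => sq_nonneg _)
  have hIu2nn : 0 ≤ ∫ x in (0:ℝ)..1, u x ^ 2 :=
    intervalIntegral.integral_nonneg zero_le_one (fun x _ => sq_nonneg _)
  -- main energy estimate
  have hE : (∫ x in (0:ℝ)..1, u' x ^ 2) ≤ (∫ x in (0:ℝ)..1, f x ^ 2) / c₂ ^ 2 := by
    have h1 : (∫ x in (0:ℝ)..1, u' x ^ 2)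
        ≤ θ/2 * (∫ x in (0:ℝ)..1, f x ^ 2)
          + (1/(2*θ) + M) * ∫ x in (0:ℝ)..1, u x ^ 2 := by nlinarith [henergy, hSbound, hY]
    have hc₂ne : π ^ 2 * c₂ ≠ 0 := by positivity
    have hθval : 1/(2*θ) = π ^ 2 * c₂ / 2 := by rw [hθdef]; field_simp
    have hMval : M = π ^ 2 * (1 - c₂) := by rw [hc₂def]; field_simp; ring
    have h2 : (1/(2*θ) + M) * (∫ x in (0:ℝ)..1, u x ^ 2)
        ≤ (π ^ 2 * c₂/2 + M) * ((∫ x in (0:ℝ)..1, u' x ^ 2) / π ^ 2) := by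
      rw [hθval]
      apply mul_le_mul_of_nonneg_left _ (by nlinarith [mul_pos hπ2 hc₂])
      rw [le_div_iff₀ hπ2]; nlinarith [hpoin]
    have h4 : (π ^ 2 * c₂/2 + M) * ((∫ x in (0:ℝ)..1, u' x ^ 2) / π ^ 2)
        = (1 - c₂/2) * (∫ x in (0:ℝ)..1, u' x ^ 2) := by
      rw [hMval]; field_simp; ring
    have h5 : c₂/2 * (∫ x in (0:ℝ)..1, u' x ^ 2)
        ≤ θ/2 * (∫ x in (0:ℝ)..1, f x ^ 2) := by linarith [h1, h2, h4]
    have hθval2 : θ/2 = 1/(2 * π ^ 2 * c₂) := by rw [hθdef]; ring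
    rw [hθval2] at h5
    rw [le_div_iff₀ (by positivity)]
    have hπ1 : (1:ℝ) ≤ π ^ 2 := by nlinarith [Real.pi_gt_three]
    have h6 := mul_le_mul_of_nonneg_left h5 (le_of_lt (show (0:ℝ) < 2 * π ^ 2 * c₂ by positivity))
    have h7 : (2 * π ^ 2 * c₂) * (1/(2 * π ^ 2 * c₂) * (∫ x in (0:ℝ)..1, f x ^ 2))
        = ∫ x in (0:ℝ)..1, f x ^ 2 := by field_simp
    rw [h7] at h6
    nlinarith [h6, mul_nonneg hIu'nn (mul_nonneg hc₂.le hc₂.le)]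
  have hpart1 : Real.sqrt (∫ x in (0:ℝ)..1, u' x ^ 2)
      ≤ Real.sqrt (∫ x in (0:ℝ)..1, f x ^ 2) / c₂ := by
    have := Real.sqrt_le_sqrt hE
    rwa [Real.sqrt_div hIf2nn, Real.sqrt_sq hc₂.le] at this
  refine ⟨hpart1, ?_⟩
  -- part 2: sup bound
  intro x hx
  have hA : IntervalIntegrable (fun z => u' z ^ 2) volume 0 x := by
    apply ContinuousOn.intervalIntegrable
    apply (hu'c.pow 2).mono
    rw [Set.uIcc_of_le hx.1]
    exact Set.Icc_subset_Icc le_rfl hx.2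
  have hB : IntervalIntegrable (fun z => u' z ^ 2) volume x 1 := by
    apply ContinuousOn.intervalIntegrable
    apply (hu'c.pow 2).mono
    rw [Set.uIcc_of_le hx.2]
    exact Set.Icc_subset_Icc hx.1 le_rfl
  have hAB := intervalIntegral.integral_add_adjacent_intervals hA hB
  have hAnn : 0 ≤ ∫ z in (0:ℝ)..x, u' z ^ 2 :=
    intervalIntegral.integral_nonneg hx.1 (fun z _ => sq_nonneg _)
  have hBnn : 0 ≤ ∫ z in x..(1:ℝ), u' z ^ 2 :=
    intervalIntegral.integral_nonneg hx.2 (fun z _ => sq_nonneg _)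
  -- |u x|² ≤ x * A and |u x|² ≤ (1-x) * B
  have h01 : (0:ℝ) ∈ Set.Icc (0:ℝ) 1 := by norm_num
  have h11 : (1:ℝ) ∈ Set.Icc (0:ℝ) 1 := by norm_num
  have hux1 : u x = ∫ z in (0:ℝ)..x, u' z := by
    have := hftc 0 h01 x hx; rwa [hu0, sub_zero] at this
  have hux2 : -u x = ∫ z in x..(1:ℝ), u' z := by
    have := hftc x hx 1 h11; rwa [hu1, zero_sub] at this
  have hsq1 : u x ^ 2 ≤ x * ∫ z in (0:ℝ)..x, u' z ^ 2 := by
    have := cs_const hx.1 (hu'c.mono (Set.Icc_subset_Icc le_rfl hx.2))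
    rw [← hux1] at this
    simpa using this
  have hsq2 : u x ^ 2 ≤ (1-x) * ∫ z in x..(1:ℝ), u' z ^ 2 := by
    have := cs_const hx.2 (hu'c.mono (Set.Icc_subset_Icc hx.1 le_rfl))
    rw [← hux2] at this
    simpa [neg_pow] using this
  -- 2|u x| ≤ sqrt E
  have h2u : 2 * |u x| ≤ Real.sqrt (∫ z in (0:ℝ)..1, u' z ^ 2) := by
    set A := ∫ z in (0:ℝ)..x, u' z ^ 2
    set B := ∫ z in x..(1:ℝ), u' z ^ 2
    have hp1 : |u x| ≤ Real.sqrt (x * A) :=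
      Real.le_sqrt_of_sq_le (by rwa [sq_abs])
    have hp2 : |u x| ≤ Real.sqrt ((1-x) * B) :=
      Real.le_sqrt_of_sq_le (by rwa [sq_abs])
    have hsum : Real.sqrt (x * A) + Real.sqrt ((1-x) * B)
        ≤ Real.sqrt (∫ z in (0:ℝ)..1, u' z ^ 2) := by
      apply Real.le_sqrt_of_sq_le
      have e1 : Real.sqrt (x * A) ^ 2 = x * A :=
        Real.sq_sqrt (mul_nonneg hx.1 hAnn)
      have e2 : Real.sqrt ((1-x) * B) ^ 2 = (1-x) * B :=
        Real.sq_sqrt (mul_nonneg (by linarith [hx.2]) hBnn)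
      have hcross : Real.sqrt (x * A) * Real.sqrt ((1-x) * B)
          = Real.sqrt ((1-x) * A) * Real.sqrt (x * B) := by
        rw [← Real.sqrt_mul (mul_nonneg hx.1 hAnn), ← Real.sqrt_mul
          (mul_nonneg (by linarith [hx.2] : (0:ℝ) ≤ 1-x) hAnn)]
        ring_nf
      have hcross2 : 2 * Real.sqrt ((1-x) * A) * Real.sqrt (x * B)
          ≤ (1-x) * A + x * B := by
        have := two_mul_le_add_sq (Real.sqrt ((1-x) * A)) (Real.sqrt (x * B))
        rwa [Real.sq_sqrt (mul_nonneg (by linarith [hx.2] : (0:ℝ) ≤ 1-x) hAnn),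
          Real.sq_sqrt (mul_nonneg hx.1 hBnn)] at this
      have expand : (Real.sqrt (x * A) + Real.sqrt ((1-x) * B)) ^ 2
          = x * A + (1-x) * B + 2 * (Real.sqrt (x * A) * Real.sqrt ((1-x) * B)) := by
        rw [add_sq, e1, e2]; ring
      rw [expand, hcross]
      rw [← hAB]
      linarith [hcross2]
    calc 2 * |u x| ≤ Real.sqrt (x * A) + Real.sqrt ((1-x) * B) := by linarith
      _ ≤ _ := hsum
  -- conclude
  have : Real.sqrt (∫ z in (0:ℝ)..1, u' z ^ 2)
      ≤ Real.sqrt (∫ z in (0:ℝ)..1, f z ^ 2) / c₂ := hpart1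
  rw [show (2:ℝ) * c₂ = 2 * c₂ from rfl]
  have h2c : 0 < 2 * c₂ := by linarith
  rw [le_div_iff₀ h2c]
  calc |u x| * (2 * c₂) = c₂ * (2 * |u x|) := by ring
    _ ≤ c₂ * Real.sqrt (∫ z in (0:ℝ)..1, u' z ^ 2) :=
        mul_le_mul_of_nonneg_left h2u hc₂.le
    _ ≤ c₂ * (Real.sqrt (∫ z in (0:ℝ)..1, f z ^ 2) / c₂) :=
        mul_le_mul_of_nonneg_left hpart1 hc₂.le
    _ = Real.sqrt (∫ z in (0:ℝ)..1, f z ^ 2) := by field_simp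
end

section
/- Fix a partition 0 = t_0 < t_1 < ⋯ < t_N = 1 of [0,1]; for an integrable function g on (0,1) let m_j(g) = (t_j − t_{j−1})^{−1} ∫_{t_{j−1}}^{t_j} g denote its mean over the j-th subinterval. Let f : [0,1] → ℝ be continuous, let w_ℓ ≤ w_u be constants with M := max(|w_ℓ|, |w_u|) < π², set c₂ = 1 − M/π² and κ = ‖f‖_{L²(0,1)}/(2π c₂³). Let w, φ, ψ : (0,1) → ℝ be measurable with w_ℓ ≤ w(x) ≤ w_u, |φ(x)| ≤ w_u − w_ℓ, and |ψ(x)| ≤ w_u − w_ℓ for almost every x. Let u be continuously differentiable on [0,1], vanishing at 0 and 1, twice differentiable on each open subinterval with −u″(x) + m_j(w) m_j(u) = f(x) there; let q_φ and q_ψ be continuously differentiable on [0,1], vanishing at 0 and 1, twice differentiable on each open subinterval with −q_φ″(x) + m_j(w) m_j(q_φ) = −m_j(u) m_j(φ) and −q_ψ″(x) + m_j(w) m_j(q_ψ) = −m_j(u) m_j(ψ) there; and let ξ be continuously differentiable on [0,1], vanishing at 0 and 1, twice differentiable on each open subinterval with −ξ″(x) + m_j(w) m_j(ξ) = −m_j(q_φ)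 m_j(ψ) − m_j(q_ψ) m_j(φ) there. Then (∫_0^1 ξ(x)² dx)^{1/2} ≤ κ · (∫_0^1 |ψ(x)| dx) · (∫_0^1 |φ(x)| dx). -/
open MeasureTheory Real

section helpers
open MeasureTheory Real intervalIntegral


lemma quad_aux {A B C : ℝ} (hA : 0 ≤ A) (hC : 0 ≤ C)
    (h : ∀ s : ℝ, 0 ≤ s ^ 2 * A - 2 * s * B + C) : B ≤ Real.sqrt A * Real.sqrt C := by
  rcases eq_or_lt_of_le hA with hA0 | hA0
  · have hB : B ≤ 0 := by
      by_contra hB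
      push_neg at hB
      have h2 := h ((C + 1) / B)
      rw [← hA0] at h2
      have : (C + 1) / B * B = C + 1 := div_mul_cancel₀ _ (ne_of_gt hB)
      nlinarith
    have : 0 ≤ Real.sqrt A * Real.sqrt C := by positivity
    linarith
  · have h2 := h (B / A)
    have hB2 : B ^ 2 ≤ A * C := by
      have hAne : A ≠ 0 := ne_of_gt hA0
      have h3 : A * ((B / A) ^ 2 * A - 2 * (B / A) * B + C) = A * C - B ^ 2 := by
        field_simp; ring
      nlinarith [mul_nonneg hA0.le h2]
    calc B ≤ |B| := le_abs_self B
      _ = Real.sqrt (B ^ 2) := (Real.sqrt_sq_eq_abs B).symm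
      _ ≤ Real.sqrt (A * C) := Real.sqrt_le_sqrt hB2
      _ = Real.sqrt A * Real.sqrt C := Real.sqrt_mul hA C

lemma cs_interval {a b : ℝ} (hab : a ≤ b) {f g : ℝ → ℝ}
    (hf : ContinuousOn f (Set.Icc a b)) (hg : ContinuousOn g (Set.Icc a b)) :
    ∫ x in a..b, f x * g x ≤
      Real.sqrt (∫ x in a..b, f x ^ 2) * Real.sqrt (∫ x in a..b, g x ^ 2) := by
  have hu : Set.uIcc a b = Set.Icc a b := Set.uIcc_of_le hab
  have hif : IntervalIntegrable (fun x => f x ^ 2) volume a b :=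
    ContinuousOn.intervalIntegrable (by rw [hu]; exact hf.pow 2)
  have hig : IntervalIntegrable (fun x => g x ^ 2) volume a b :=
    ContinuousOn.intervalIntegrable (by rw [hu]; exact hg.pow 2)
  have hifg : IntervalIntegrable (fun x => f x * g x) volume a b :=
    ContinuousOn.intervalIntegrable (by rw [hu]; exact hf.mul hg)
  have hA : 0 ≤ ∫ x in a..b, f x ^ 2 := integral_nonneg hab (fun x _ => sq_nonneg _)
  have hC : 0 ≤ ∫ x in a..b, g x ^ 2 := integral_nonneg hab (fun x _ => sq_nonneg _)
  refine quad_aux hA hC (fun s => ?_)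
  have h1 : 0 ≤ ∫ x in a..b, (s * f x - g x) ^ 2 :=
    integral_nonneg hab (fun x _ => sq_nonneg _)
  have h2 : (∫ x in a..b, (s * f x - g x) ^ 2) =
      s ^ 2 * (∫ x in a..b, f x ^ 2) - 2 * s * (∫ x in a..b, f x * g x)
        + ∫ x in a..b, g x ^ 2 := by
    have hexp : ∀ x, (s * f x - g x) ^ 2
        = s ^ 2 * f x ^ 2 - 2 * s * (f x * g x) + g x ^ 2 := fun x => by ring
    simp only [hexp]
    rw [intervalIntegral.integral_add ((hif.const_mul _).sub (hifg.const_mul _)) hig,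
      intervalIntegral.integral_sub (hif.const_mul _) (hifg.const_mul _),
      intervalIntegral.integral_const_mul, intervalIntegral.integral_const_mul]
  linarith [h1, h2 ▸ h1]

lemma ae_restrict_cell {p q : ℝ} (hp : 0 ≤ p) (hq : q ≤ 1) {P : ℝ → Prop}
    (h : ∀ᵐ x ∂(volume.restrict (Set.Ioo (0:ℝ) 1)), P x) :
    ∀ᵐ x ∂(volume.restrict (Set.Ioc p q)), P x := by
  rw [ae_restrict_iff' measurableSet_Ioo] at h
  rw [ae_restrict_iff' measurableSet_Ioc]
  have h1 : ∀ᵐ x : ℝ, x ≠ 1 := by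
    simp only [ae_iff, not_not]
    exact measure_singleton 1
  filter_upwards [h, h1] with x hx hx1 hmem
  exact hx ⟨lt_of_le_of_lt hp hmem.1, lt_of_le_of_ne (hmem.2.trans hq) hx1⟩

lemma integrable_cell {g : ℝ → ℝ} (hg : Measurable g) {B : ℝ}
    (hb : ∀ᵐ x ∂(volume.restrict (Set.Ioo (0:ℝ) 1)), |g x| ≤ B)
    {p q : ℝ} (hp : 0 ≤ p) (hq : q ≤ 1) (hpq : p ≤ q) :
    IntervalIntegrable g volume p q := by
  rw [intervalIntegrable_iff_integrableOn_Ioc_of_le hpq]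
  refine Integrable.mono' (integrable_const B) hg.aestronglyMeasurable ?_
  filter_upwards [ae_restrict_cell hp hq hb] with x hx
  simpa using hx

lemma part_facts (N : ℕ) (t : ℕ → ℝ) (ht0 : t 0 = 0) (htN : t N = 1)
    (hmono : ∀ i < N, t i < t (i + 1)) :
    ∀ k < N, 0 ≤ t k ∧ t k < t (k + 1) ∧ t (k + 1) ≤ 1 := by
  have key : ∀ j ≤ N, ∀ i ≤ j, t i ≤ t j := by
    intro j
    induction j with
    | zero => intro _ i hi; simp [Nat.le_zero.mp hi]
    | succ n ih =>
      intro hn i hi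
      rcases Nat.eq_or_lt_of_le hi with rfl | hi'
      · exact le_refl _
      · exact (ih (by omega) i (by omega)).trans (hmono n (by omega)).le
  intro k hk
  refine ⟨?_, hmono k hk, ?_⟩
  · rw [← ht0]; exact key k (by omega) 0 (by omega)
  · rw [← htN]; exact key N (le_refl _) (k + 1) (by omega)


section
variable {v v' : ℝ → ℝ}

lemma sup_bound (hv : ∀ x ∈ Set.Icc (0:ℝ) 1, HasDerivAt v (v' x) x)
    (hv'c : ContinuousOn v' (Set.Icc 0 1)) (hv0 : v 0 = 0) (hv1 : v 1 = 0) :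
    ∀ x ∈ Set.Icc (0:ℝ) 1, 2 * |v x| ≤ Real.sqrt (∫ x in (0:ℝ)..1, v' x ^ 2) := by
  intro x hx
  obtain ⟨hx0, hx1⟩ := hx
  have hsub1 : Set.uIcc 0 x ⊆ Set.Icc (0:ℝ) 1 := by
    rw [Set.uIcc_of_le hx0]; exact Set.Icc_subset_Icc (le_refl _) hx1
  have hsub2 : Set.uIcc x 1 ⊆ Set.Icc (0:ℝ) 1 := by
    rw [Set.uIcc_of_le hx1]; exact Set.Icc_subset_Icc hx0 (le_refl _)
  have hi1 : IntervalIntegrable v' volume 0 x :=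
    ContinuousOn.intervalIntegrable (hv'c.mono hsub1)
  have hi2 : IntervalIntegrable v' volume x 1 :=
    ContinuousOn.intervalIntegrable (hv'c.mono hsub2)
  have e1 : (∫ y in (0:ℝ)..x, v' y) = v x := by
    rw [intervalIntegral.integral_eq_sub_of_hasDerivAt (fun y hy => hv y (hsub1 hy)) hi1,
      hv0, sub_zero]
  have e2 : (∫ y in x..(1:ℝ), v' y) = -v x := by
    rw [intervalIntegral.integral_eq_sub_of_hasDerivAt (fun y hy => hv y (hsub2 hy)) hi2, hv1,
      zero_sub]
  have b1 : |v x| ≤ ∫ y in (0:ℝ)..x, |v' y| := by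
    rw [← e1]; exact intervalIntegral.abs_integral_le_integral_abs hx0
  have b2 : |v x| ≤ ∫ y in x..(1:ℝ), |v' y| := by
    rw [← (abs_neg (v x)), ← e2]; exact intervalIntegral.abs_integral_le_integral_abs hx1
  have hadd : (∫ y in (0:ℝ)..x, |v' y|) + (∫ y in x..(1:ℝ), |v' y|)
      = ∫ y in (0:ℝ)..1, |v' y| :=
    intervalIntegral.integral_add_adjacent_intervals hi1.abs hi2.abs
  have habs : ContinuousOn (fun y => |v' y|) (Set.Icc (0:ℝ) 1) := hv'c.abs
  have hcs : (∫ y in (0:ℝ)..1, |v' y| * 1) ≤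
      Real.sqrt (∫ y in (0:ℝ)..1, |v' y| ^ 2) * Real.sqrt (∫ y in (0:ℝ)..1, (1:ℝ) ^ 2) := by
    exact cs_interval zero_le_one habs continuousOn_const
  simp only [mul_one, one_pow, sq_abs] at hcs
  have hone : (∫ (y : ℝ) in (0:ℝ)..1, (1:ℝ)) = 1 := by simp
  rw [hone, Real.sqrt_one, mul_one] at hcs
  linarith

end

set_option maxHeartbeats 1000000 in
lemma poincare_s17 {v v' : ℝ → ℝ}
    (hv : ∀ x ∈ Set.Icc (0:ℝ) 1, HasDerivAt v (v' x) x)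
    (hv'c : ContinuousOn v' (Set.Icc 0 1)) (hv0 : v 0 = 0) (hv1 : v 1 = 0) :
    π ^ 2 * ∫ x in (0:ℝ)..1, v x ^ 2 ≤ ∫ x in (0:ℝ)..1, v' x ^ 2 := by
  have hπ := Real.pi_pos
  have hvc : ContinuousOn v (Set.Icc 0 1) :=
    fun x hx => (hv x hx).continuousAt.continuousWithinAt
  obtain ⟨K0, hK0⟩ := (isCompact_Icc).exists_bound_of_continuousOn hv'c
  set K := max K0 0 with hKdef
  have hK : ∀ x ∈ Set.Icc (0:ℝ) 1, |v' x| ≤ K := fun x hx => (hK0 x hx).trans (le_max_left _ _)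
  have hKnn : (0:ℝ) ≤ K := le_max_right _ _
  have hd : ∀ x ∈ Set.Icc (0:ℝ) 1, HasDerivWithinAt v (v' x) (Set.Icc 0 1) x :=
    fun x hx => (hv x hx).hasDerivWithinAt
  have hlow : ∀ x ∈ Set.Icc (0:ℝ) 1, |v x| ≤ K * x := by
    intro x hx
    have h := (convex_Icc (0:ℝ) 1).norm_image_sub_le_of_norm_hasDerivWithin_le hd
      (fun y hy => hK y hy) ⟨le_refl 0, zero_le_one⟩ hx
    simpa [hv0, Real.norm_eq_abs, abs_of_nonneg hx.1] using h
  have hhigh : ∀ x ∈ Set.Icc (0:ℝ) 1, |v x| ≤ K * (1 - x) := by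
    intro x hx
    have h := (convex_Icc (0:ℝ) 1).norm_image_sub_le_of_norm_hasDerivWithin_le hd
      (fun y hy => hK y hy) ⟨zero_le_one, le_refl 1⟩ hx
    have habs : |x - 1| = 1 - x := by rw [abs_sub_comm, abs_of_nonneg (by linarith [hx.2])]
    simpa [hv1, Real.norm_eq_abs, habs] using h
  have hsq : ∀ x ∈ Set.Icc (0:ℝ) 1, v x ^ 2 ≤ K ^ 2 := by
    intro x hx
    have h1 := hlow x hx
    have h2 : K * x ≤ K * 1 := mul_le_mul_of_nonneg_left hx.2 hKnn
    have h3 : |v x| ≤ K := by linarith [h1, h2]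
    have h4 := mul_le_mul h3 h3 (abs_nonneg _) hKnn
    rw [abs_mul_abs_self] at h4
    calc v x ^ 2 = v x * v x := by ring
      _ ≤ K * K := h4
      _ = K ^ 2 := by ring
  have key : ∀ δ : ℝ, 0 < δ → δ ≤ 1/2 →
      π ^ 2 * (∫ x in (0:ℝ)..1, v x ^ 2) ≤ (∫ x in (0:ℝ)..1, v' x ^ 2)
        + δ * (π * K ^ 2 + 2 * π ^ 2 * K ^ 2) := by
    intro δ hδ0 hδh
    obtain ⟨a, hadef⟩ : ∃ a : ℝ, a = δ := ⟨δ, rfl⟩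
    obtain ⟨b, hbdef⟩ : ∃ b : ℝ, b = 1 - δ := ⟨1 - δ, rfl⟩
    have hab : a ≤ b := by rw [hadef, hbdef]; linarith
    have ha0 : (0:ℝ) ≤ a := by rw [hadef]; linarith
    have hb1 : b ≤ 1 := by rw [hbdef]; linarith
    have hsub : Set.Icc a b ⊆ Set.Icc 0 1 := Set.Icc_subset_Icc ha0 hb1
    have hsin : ∀ x ∈ Set.Icc a b, 0 < Real.sin (π * x) := by
      intro x hx
      have hx1 : a ≤ x := hx.1
      have hx2 : x ≤ b := hx.2
      rw [hadef] at hx1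
      rw [hbdef] at hx2
      have hx0 : 0 < x := lt_of_lt_of_le hδ0 hx1
      have hx3 : x < 1 := by linarith
      apply Real.sin_pos_of_pos_of_lt_pi
      · positivity
      · calc π * x < π * 1 := by exact mul_lt_mul_of_pos_left hx3 hπ
          _ = π := mul_one π
    set F : ℝ → ℝ := fun y => π * (Real.cos (π*y) / Real.sin (π*y) * v y ^ 2) with hFdef
    have hFderiv : ∀ x ∈ Set.Ioo a b, HasDerivAt F
        (v' x ^ 2 - π ^ 2 * v x ^ 2
          - (v' x - π * (Real.cos (π*x) / Real.sin (π*x)) * v x) ^ 2) x := by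
      intro x hx
      have hxI : x ∈ Set.Icc (0:ℝ) 1 := hsub (Set.Ioo_subset_Icc_self hx)
      have hs := hsin x (Set.Ioo_subset_Icc_self hx)
      have hπx : HasDerivAt (fun y : ℝ => π * y) π x := by
        simpa using (hasDerivAt_id x).const_mul π
      have hsin' : HasDerivAt (fun y => Real.sin (π*y)) (Real.cos (π*x) * π) x :=
        (Real.hasDerivAt_sin (π*x)).comp x hπx
      have hcos' : HasDerivAt (fun y => Real.cos (π*y)) (-Real.sin (π*x) * π) x :=
        (Real.hasDerivAt_cos (π*x)).comp x hπx
      have hquot := hcos'.div hsin' (ne_of_gt hs)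
      have hv2 : HasDerivAt (fun y => v y ^ 2) (2 * v x ^ 1 * v' x) x := (hv x hxI).pow 2
      have hmul := (hquot.mul hv2).const_mul π
      convert hmul using 1
      have hs2 : Real.sin (π*x) ≠ 0 := ne_of_gt hs
      · rfl
      · rfl
      · rfl
      rw [Pi.div_apply]
      field_simp
      ring_nf
    have hcos_c : ContinuousOn (fun y => Real.cos (π*y)) (Set.Icc a b) :=
      (Real.continuous_cos.comp (continuous_const.mul continuous_id)).continuousOn
    have hsin_c : ContinuousOn (fun y => Real.sin (π*y)) (Set.Icc a b) :=
      (Real.continuous_sin.comp (continuous_const.mul continuous_id)).continuousOn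
    have hquot_c : ContinuousOn (fun y => Real.cos (π*y) / Real.sin (π*y)) (Set.Icc a b) :=
      hcos_c.div hsin_c (fun x hx => ne_of_gt (hsin x hx))
    have hvab : ContinuousOn v (Set.Icc a b) := hvc.mono hsub
    have hv'ab : ContinuousOn v' (Set.Icc a b) := hv'c.mono hsub
    have hFc : ContinuousOn F (Set.Icc a b) :=
      continuousOn_const.mul (hquot_c.mul (hvab.pow 2))
    set g : ℝ → ℝ :=
      fun x => (v' x - π * (Real.cos (π*x) / Real.sin (π*x)) * v x) ^ 2 with hgdef
    have hgc : ContinuousOn g (Set.Icc a b) :=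
      ((hv'ab.sub ((continuousOn_const.mul hquot_c).mul hvab)).pow 2)
    have hEc : ContinuousOn (fun x => v' x ^ 2 - π ^ 2 * v x ^ 2 - g x) (Set.Icc a b) :=
      ((hv'ab.pow 2).sub (continuousOn_const.mul (hvab.pow 2))).sub hgc
    have hu : Set.uIcc a b = Set.Icc a b := Set.uIcc_of_le hab
    have hEi : IntervalIntegrable (fun x => v' x ^ 2 - π ^ 2 * v x ^ 2 - g x) volume a b :=
      ContinuousOn.intervalIntegrable (by rw [hu]; exact hEc)
    have hgi : IntervalIntegrable g volume a b :=
      ContinuousOn.intervalIntegrable (by rw [hu]; exact hgc)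
    have hv2i : IntervalIntegrable (fun x => v x ^ 2) volume a b :=
      ContinuousOn.intervalIntegrable (by rw [hu]; exact hvab.pow 2)
    have hv'2i : IntervalIntegrable (fun x => v' x ^ 2) volume a b :=
      ContinuousOn.intervalIntegrable (by rw [hu]; exact hv'ab.pow 2)
    have hftc : (∫ x in a..b, (v' x ^ 2 - π ^ 2 * v x ^ 2 - g x)) = F b - F a :=
      intervalIntegral.integral_eq_sub_of_hasDeriv_right_of_le hab hFc
        (fun x hx => (hFderiv x hx).hasDerivWithinAt) hEi
    have hsplit : (∫ x in a..b, (v' x ^ 2 - π ^ 2 * v x ^ 2 - g x))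
        = (∫ x in a..b, v' x ^ 2) - π ^ 2 * (∫ x in a..b, v x ^ 2) - ∫ x in a..b, g x := by
      rw [intervalIntegral.integral_sub ((hv'2i).sub (hv2i.const_mul _)) hgi,
        intervalIntegral.integral_sub hv'2i (hv2i.const_mul _),
        intervalIntegral.integral_const_mul]
    have hgnn : 0 ≤ ∫ x in a..b, g x :=
      intervalIntegral.integral_nonneg hab (fun x _ => sq_nonneg _)
    -- boundary bounds
    have hsinpos : 0 < Real.sin (π * δ) := by
      have h := hsin a ⟨le_refl a, hab⟩
      rwa [hadef] at h
    have hsinδ : 2 * δ ≤ Real.sin (π * δ) := by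
      have hhalfpi : π * δ ≤ π / 2 := by
        have h := mul_le_mul_of_nonneg_left hδh hπ.le
        linarith
      have h := Real.mul_le_sin (x := π * δ) (by positivity) hhalfpi
      calc 2 * δ = 2 / π * (π * δ) := by field_simp
        _ ≤ Real.sin (π * δ) := h
    have hcosδ0 : 0 ≤ Real.cos (π * δ) := by
      have hhalfpi : π * δ ≤ π / 2 := by
        have h := mul_le_mul_of_nonneg_left hδh hπ.le
        linarith
      apply Real.cos_nonneg_of_mem_Icc
      constructor
      · have : 0 ≤ π * δ := by positivity
        linarith
      · exact hhalfpi
    have hcosδ1 : Real.cos (π * δ) ≤ 1 := Real.cos_le_one _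
    have hquotb : Real.cos (π * δ) / Real.sin (π * δ) ≤ 1 / (2 * δ) :=
      div_le_div₀ (by norm_num) hcosδ1 (by positivity) hsinδ
    have hquotnn : 0 ≤ Real.cos (π * δ) / Real.sin (π * δ) :=
      div_nonneg hcosδ0 hsinpos.le
    have hvaI : a ∈ Set.Icc (0:ℝ) 1 := ⟨ha0, by rw [hadef]; linarith⟩
    have hvbI : b ∈ Set.Icc (0:ℝ) 1 := ⟨by rw [hbdef]; linarith, hb1⟩
    have hva2 : v a ^ 2 ≤ K ^ 2 * δ ^ 2 := by
      have h1 := hlow a hvaI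
      have ha' : K * a ≤ K * δ := by rw [hadef]
      have h4 := mul_le_mul (h1.trans ha') (h1.trans ha') (abs_nonneg _)
        (mul_nonneg hKnn hδ0.le)
      rw [abs_mul_abs_self] at h4
      calc v a ^ 2 = v a * v a := by ring
        _ ≤ K * δ * (K * δ) := h4
        _ = K ^ 2 * δ ^ 2 := by ring
    have hvb2 : v b ^ 2 ≤ K ^ 2 * δ ^ 2 := by
      have h1 := hhigh b hvbI
      have h2 : (1 : ℝ) - b = δ := by rw [hbdef]; ring
      rw [h2] at h1
      have h4 := mul_le_mul h1 h1 (abs_nonneg _) (mul_nonneg hKnn hδ0.le)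
      rw [abs_mul_abs_self] at h4
      calc v b ^ 2 = v b * v b := by ring
        _ ≤ K * δ * (K * δ) := h4
        _ = K ^ 2 * δ ^ 2 := by ring
    have hhalf : (1 / (2 * δ)) * (K ^ 2 * δ ^ 2) = K ^ 2 * δ / 2 := by
      rw [div_mul_eq_mul_div, one_mul,
        div_eq_div_iff (by positivity : (0:ℝ) < 2 * δ).ne' (by norm_num : (2:ℝ) ≠ 0)]
      ring
    have hprod : Real.cos (π * δ) / Real.sin (π * δ) * v a ^ 2 ≤ K ^ 2 * δ / 2 := by
      calc Real.cos (π * δ) / Real.sin (π * δ) * v a ^ 2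
          ≤ (1 / (2 * δ)) * (K ^ 2 * δ ^ 2) :=
            mul_le_mul hquotb hva2 (sq_nonneg _) (by positivity)
        _ = K ^ 2 * δ / 2 := hhalf
    have hprodb : Real.cos (π * δ) / Real.sin (π * δ) * v b ^ 2 ≤ K ^ 2 * δ / 2 := by
      calc Real.cos (π * δ) / Real.sin (π * δ) * v b ^ 2
          ≤ (1 / (2 * δ)) * (K ^ 2 * δ ^ 2) :=
            mul_le_mul hquotb hvb2 (sq_nonneg _) (by positivity)
        _ = K ^ 2 * δ / 2 := hhalf
    have hprodnn : 0 ≤ Real.cos (π * δ) / Real.sin (π * δ) * v b ^ 2 :=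
      mul_nonneg hquotnn (sq_nonneg _)
    have hFa_eq : F a = π * (Real.cos (π*δ) / Real.sin (π*δ) * v a ^ 2) := by
      rw [hFdef]
      show π * (Real.cos (π*a) / Real.sin (π*a) * v a ^ 2) = _
      rw [hadef]
    have hFb_eq : F b = -(π * (Real.cos (π*δ) / Real.sin (π*δ) * v b ^ 2)) := by
      rw [hFdef]
      show π * (Real.cos (π*b) / Real.sin (π*b) * v b ^ 2) = _
      have hπb : π * b = π - π * δ := by rw [hbdef]; ring
      rw [hπb, Real.cos_pi_sub, Real.sin_pi_sub]
      ring
    have hFa_ub : F a ≤ π * (K ^ 2 * δ / 2) := by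
      rw [hFa_eq]; exact mul_le_mul_of_nonneg_left hprod hπ.le
    have hFa_lb : 0 ≤ F a := by
      rw [hFa_eq]; exact mul_nonneg hπ.le (mul_nonneg hquotnn (sq_nonneg _))
    have hFb_lb : -(π * (K ^ 2 * δ / 2)) ≤ F b := by
      rw [hFb_eq]
      have := mul_le_mul_of_nonneg_left hprodb hπ.le
      linarith
    have hmid : (∫ x in a..b, v' x ^ 2) - π ^ 2 * (∫ x in a..b, v x ^ 2)
        ≥ -(π * K ^ 2 * δ) := by
      have h1 : (∫ x in a..b, v' x ^ 2) - π ^ 2 * (∫ x in a..b, v x ^ 2)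
          - (∫ x in a..b, g x) = F b - F a := by rw [← hsplit]; exact hftc
      linarith [hgnn, hFb_lb, hFa_ub, h1]
    -- tails
    have tails : ∀ p q : ℝ, 0 ≤ p → p ≤ q → q ≤ 1 →
        (∫ x in p..q, v x ^ 2) ≤ (q - p) * K ^ 2 ∧
        IntervalIntegrable (fun x => v x ^ 2) volume p q ∧
        IntervalIntegrable (fun x => v' x ^ 2) volume p q ∧
        0 ≤ (∫ x in p..q, v' x ^ 2) ∧ 0 ≤ (∫ x in p..q, v x ^ 2) := by
      intro p q hp hpq hq
      have hsub2 : Set.Icc p q ⊆ Set.Icc (0:ℝ) 1 := Set.Icc_subset_Icc hp hq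
      have huu : Set.uIcc p q = Set.Icc p q := Set.uIcc_of_le hpq
      have i1 : IntervalIntegrable (fun x => v x ^ 2) volume p q :=
        ContinuousOn.intervalIntegrable (by rw [huu]; exact (hvc.mono hsub2).pow 2)
      have i2 : IntervalIntegrable (fun x => v' x ^ 2) volume p q :=
        ContinuousOn.intervalIntegrable (by rw [huu]; exact (hv'c.mono hsub2).pow 2)
      refine ⟨?_, i1, i2, intervalIntegral.integral_nonneg hpq (fun x _ => sq_nonneg _),
        intervalIntegral.integral_nonneg hpq (fun x _ => sq_nonneg _)⟩
      calc (∫ x in p..q, v x ^ 2) ≤ ∫ x in p..q, K ^ 2 :=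
            intervalIntegral.integral_mono_on hpq i1 intervalIntegrable_const
              (fun x hx => hsq x (hsub2 hx))
        _ = (q - p) * K ^ 2 := by simp [smul_eq_mul]
    obtain ⟨tb1, ti1, ti1', tn1, tn1'⟩ := tails 0 a (le_refl 0) ha0 hvaI.2
    obtain ⟨tb2, ti2, ti2', tn2, tn2'⟩ := tails a b ha0 hab hb1
    obtain ⟨tb3, ti3, ti3', tn3, tn3'⟩ := tails b 1 hvbI.1 hb1 (le_refl 1)
    have hsplitv : (∫ x in (0:ℝ)..1, v x ^ 2)
        = (∫ x in (0:ℝ)..a, v x ^ 2) + (∫ x in a..b, v x ^ 2) + (∫ x in b..1, v x ^ 2) := by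
      rw [intervalIntegral.integral_add_adjacent_intervals ti1 ti2,
        intervalIntegral.integral_add_adjacent_intervals (ti1.trans ti2) ti3]
    have hsplitv' : (∫ x in (0:ℝ)..1, v' x ^ 2)
        = (∫ x in (0:ℝ)..a, v' x ^ 2) + (∫ x in a..b, v' x ^ 2) + (∫ x in b..1, v' x ^ 2) := by
      rw [intervalIntegral.integral_add_adjacent_intervals ti1' ti2',
        intervalIntegral.integral_add_adjacent_intervals (ti1'.trans ti2') ti3']
    have e1 : (a : ℝ) - 0 = δ := by rw [hadef]; ring
    have e3 : (1 : ℝ) - b = δ := by rw [hbdef]; ring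
    rw [e1] at tb1
    rw [e3] at tb3
    have m1 : π ^ 2 * (∫ x in (0:ℝ)..a, v x ^ 2) ≤ π ^ 2 * (δ * K ^ 2) :=
      mul_le_mul_of_nonneg_left tb1 (by positivity)
    have m3 : π ^ 2 * (∫ x in b..1, v x ^ 2) ≤ π ^ 2 * (δ * K ^ 2) :=
      mul_le_mul_of_nonneg_left tb3 (by positivity)
    have hmid2 : (∫ x in a..b, v' x ^ 2) ≤ ∫ x in (0:ℝ)..1, v' x ^ 2 := by
      rw [hsplitv']; linarith
    have m2 : π ^ 2 * (∫ x in (0:ℝ)..1, v x ^ 2)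
        = π ^ 2 * (∫ x in (0:ℝ)..a, v x ^ 2) + π ^ 2 * (∫ x in a..b, v x ^ 2)
          + π ^ 2 * (∫ x in b..1, v x ^ 2) := by rw [hsplitv]; ring
    linarith [m2, m1, m3, hmid, hmid2]
  refine le_of_forall_pos_le_add (fun ε hε => ?_)
  have hC0 : 0 ≤ π * K ^ 2 + 2 * π ^ 2 * K ^ 2 := by positivity
  set C : ℝ := π * K ^ 2 + 2 * π ^ 2 * K ^ 2 with hCdef
  set δ : ℝ := min (1/2) (ε / (C + 1)) with hδdef
  have hδ0 : 0 < δ := lt_min (by norm_num) (by positivity)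
  have hδh : δ ≤ 1/2 := min_le_left _ _
  have hkey := key δ hδ0 hδh
  have hδC : δ * C ≤ ε := by
    have h1 : δ ≤ ε / (C + 1) := min_le_right _ _
    have h2 : δ * (C + 1) ≤ ε := by
      rw [← le_div_iff₀ (by positivity)]; exact h1
    have h3 : δ * (C + 1) = δ * C + δ := by ring
    linarith
  linarith

lemma cellMean_succ (t : ℕ → ℝ) (k : ℕ) (g : ℝ → ℝ) :
    cellMean t (k+1) g = (t (k+1) - t k)⁻¹ * ∫ x in (t k)..(t (k+1)), g x := by
  simp [cellMean]

lemma cell_abs_le {p q : ℝ} (hpq : p ≤ q) {g : ℝ → ℝ}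
    (hi : IntervalIntegrable g volume p q) {B : ℝ}
    (hB : ∀ x ∈ Set.Icc p q, |g x| ≤ B) :
    |∫ x in p..q, g x| ≤ (q - p) * B := by
  calc |∫ x in p..q, g x| ≤ ∫ x in p..q, |g x| :=
        intervalIntegral.abs_integral_le_integral_abs hpq
    _ ≤ ∫ x in p..q, B :=
        intervalIntegral.integral_mono_on hpq hi.abs intervalIntegrable_const hB
    _ = (q - p) * B := by simp [smul_eq_mul]

lemma sum_term_bound (N : ℕ) (t : ℕ → ℝ) (ht0 : t 0 = 0) (htN : t N = 1)
    (hmono : ∀ i < N, t i < t (i + 1))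
    (g χ v : ℝ → ℝ) (Bg Bv : ℝ) (hBg0 : 0 ≤ Bg) (hBv0 : 0 ≤ Bv)
    (hgc : ContinuousOn g (Set.Icc 0 1)) (hvc : ContinuousOn v (Set.Icc 0 1))
    (hχi : ∀ k < N, IntervalIntegrable χ volume (t k) (t (k+1)))
    (hBg : ∀ x ∈ Set.Icc (0:ℝ) 1, |g x| ≤ Bg)
    (hBv : ∀ x ∈ Set.Icc (0:ℝ) 1, |v x| ≤ Bv) :
    ∑ k ∈ Finset.range N, (-(cellMean t (k+1) g * cellMean t (k+1) χ))
        * (∫ x in (t k)..(t (k+1)), v x)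
      ≤ Bg * Bv * ∫ x in (0:ℝ)..1, |χ x| := by
  have pf := part_facts N t ht0 htN hmono
  have habs : (∫ x in (0:ℝ)..1, |χ x|)
      = ∑ k ∈ Finset.range N, ∫ x in (t k)..(t (k+1)), |χ x| := by
    rw [intervalIntegral.sum_integral_adjacent_intervals (fun k hk => (hχi k hk).abs),
      ht0, htN]
  rw [habs, Finset.mul_sum]
  apply Finset.sum_le_sum
  intro k hk
  have hk' := Finset.mem_range.mp hk
  obtain ⟨hp0, hpq, hq1⟩ := pf k hk'
  have hsub : Set.Icc (t k) (t (k+1)) ⊆ Set.Icc (0:ℝ) 1 := Set.Icc_subset_Icc hp0 hq1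
  have hd0 : (0:ℝ) < t (k+1) - t k := by linarith
  have hu : Set.uIcc (t k) (t (k+1)) = Set.Icc (t k) (t (k+1)) := Set.uIcc_of_le hpq.le
  have hgi : IntervalIntegrable g volume (t k) (t (k+1)) :=
    ContinuousOn.intervalIntegrable (by rw [hu]; exact hgc.mono hsub)
  have hvi : IntervalIntegrable v volume (t k) (t (k+1)) :=
    ContinuousOn.intervalIntegrable (by rw [hu]; exact hvc.mono hsub)
  have hg1 : |∫ x in (t k)..(t (k+1)), g x| ≤ (t (k+1) - t k) * Bg :=
    cell_abs_le hpq.le hgi (fun x hx => hBg x (hsub hx))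
  have hv1 : |∫ x in (t k)..(t (k+1)), v x| ≤ (t (k+1) - t k) * Bv :=
    cell_abs_le hpq.le hvi (fun x hx => hBv x (hsub hx))
  have hχ1 : |∫ x in (t k)..(t (k+1)), χ x| ≤ ∫ x in (t k)..(t (k+1)), |χ x| :=
    intervalIntegral.abs_integral_le_integral_abs hpq.le
  have hχnn : 0 ≤ ∫ x in (t k)..(t (k+1)), |χ x| :=
    intervalIntegral.integral_nonneg hpq.le (fun x _ => abs_nonneg _)
  rw [cellMean_succ, cellMean_succ]
  calc -((t (k+1) - t k)⁻¹ * (∫ x in (t k)..(t (k+1)), g x)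
          * ((t (k+1) - t k)⁻¹ * ∫ x in (t k)..(t (k+1)), χ x))
        * (∫ x in (t k)..(t (k+1)), v x)
      ≤ |(-((t (k+1) - t k)⁻¹ * (∫ x in (t k)..(t (k+1)), g x)
          * ((t (k+1) - t k)⁻¹ * ∫ x in (t k)..(t (k+1)), χ x)))
        * (∫ x in (t k)..(t (k+1)), v x)| := le_abs_self _
    _ = (t (k+1) - t k)⁻¹ * |∫ x in (t k)..(t (k+1)), g x|
          * ((t (k+1) - t k)⁻¹ * |∫ x in (t k)..(t (k+1)), χ x|)
          * |∫ x in (t k)..(t (k+1)), v x| := by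
        rw [abs_mul, abs_neg, abs_mul, abs_mul, abs_mul, abs_inv,
          abs_of_pos hd0]
    _ ≤ (t (k+1) - t k)⁻¹ * ((t (k+1) - t k) * Bg)
          * ((t (k+1) - t k)⁻¹ * ∫ x in (t k)..(t (k+1)), |χ x|)
          * ((t (k+1) - t k) * Bv) := by
        have h1 : (0:ℝ) ≤ (t (k+1) - t k)⁻¹ := by positivity
        gcongr
        all_goals first | exact abs_nonneg _ | assumption
    _ = Bg * Bv * ∫ x in (t k)..(t (k+1)), |χ x| := by
        field_simp

set_option maxHeartbeats 1000000 in
lemma apriori (N : ℕ) (t : ℕ → ℝ) (ht0 : t 0 = 0) (htN : t N = 1)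
    (hmono : ∀ i < N, t i < t (i + 1))
    (wl wu : ℝ) (hMpi : max |wl| |wu| < π ^ 2)
    (w : ℝ → ℝ) (hwm : Measurable w)
    (hwb : ∀ᵐ x ∂(volume.restrict (Set.Ioo (0:ℝ) 1)), wl ≤ w x ∧ w x ≤ wu)
    (v v' v'' : ℝ → ℝ)
    (hv : ∀ x ∈ Set.Icc (0:ℝ) 1, HasDerivAt v (v' x) x)
    (hv'c : ContinuousOn v' (Set.Icc 0 1))
    (hv0 : v 0 = 0) (hv1 : v 1 = 0)
    (ρ : ℕ → ℝ → ℝ)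
    (hρc : ∀ k < N, ContinuousOn (ρ (k+1)) (Set.Icc (t k) (t (k+1))))
    (hode : ∀ k < N, ∀ x ∈ Set.Ioo (t k) (t (k+1)),
      HasDerivAt v' (v'' x) x ∧
      -v'' x + cellMean t (k+1) w * cellMean t (k+1) v = ρ (k+1) x) :
    (1 - max |wl| |wu| / π ^ 2) * (∫ x in (0:ℝ)..1, v' x ^ 2)
      ≤ ∑ k ∈ Finset.range N, ∫ x in (t k)..(t (k+1)), ρ (k+1) x * v x := by
  have hπ := Real.pi_pos
  have pf := part_facts N t ht0 htN hmono
  have hvc : ContinuousOn v (Set.Icc 0 1) :=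
    fun x hx => (hv x hx).continuousAt.continuousWithinAt
  have hM0 : (0:ℝ) ≤ max |wl| |wu| := le_trans (abs_nonneg wl) (le_max_left _ _)
  -- per-cell energy identity
  have hcell : ∀ k < N, (∫ x in (t k)..(t (k+1)), v' x ^ 2)
      = (v' (t (k+1)) * v (t (k+1)) - v' (t k) * v (t k))
        + (∫ x in (t k)..(t (k+1)), ρ (k+1) x * v x)
        - (t (k+1) - t k) * (cellMean t (k+1) w * cellMean t (k+1) v ^ 2) := by
    intro k hk
    obtain ⟨hp0, hpq, hq1⟩ := pf k hk
    have hsub : Set.Icc (t k) (t (k+1)) ⊆ Set.Icc (0:ℝ) 1 := Set.Icc_subset_Icc hp0 hq1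
    have hne : t (k+1) - t k ≠ 0 := by linarith
    have hu : Set.uIcc (t k) (t (k+1)) = Set.Icc (t k) (t (k+1)) := Set.uIcc_of_le hpq.le
    have hvab : ContinuousOn v (Set.Icc (t k) (t (k+1))) := hvc.mono hsub
    have hv'ab : ContinuousOn v' (Set.Icc (t k) (t (k+1))) := hv'c.mono hsub
    have hρab := hρc k hk
    set c : ℝ := cellMean t (k+1) w * cellMean t (k+1) v with hcdef
    have hGc : ContinuousOn (fun x => v' x * v x) (Set.Icc (t k) (t (k+1))) :=
      hv'ab.mul hvab
    have hder : ∀ x ∈ Set.Ioo (t k) (t (k+1)),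
        HasDerivAt (fun y => v' y * v y) ((c - ρ (k+1) x) * v x + v' x ^ 2) x := by
      intro x hx
      obtain ⟨h1, h2⟩ := hode k hk x hx
      have hxI : x ∈ Set.Icc (0:ℝ) 1 := hsub (Set.Ioo_subset_Icc_self hx)
      have h3 := h1.mul (hv x hxI)
      have h4 : v'' x * v x + v' x * v' x = (c - ρ (k+1) x) * v x + v' x ^ 2 := by
        have h5 : v'' x = c - ρ (k+1) x := by rw [hcdef]; linarith [h2]
        rw [h5]; ring
      rwa [h4] at h3
    have hEc : ContinuousOn (fun x => (c - ρ (k+1) x) * v x + v' x ^ 2)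
        (Set.Icc (t k) (t (k+1))) :=
      ((continuousOn_const.sub hρab).mul hvab).add (hv'ab.pow 2)
    have hEi : IntervalIntegrable (fun x => (c - ρ (k+1) x) * v x + v' x ^ 2)
        volume (t k) (t (k+1)) :=
      ContinuousOn.intervalIntegrable (by rw [hu]; exact hEc)
    have hftc : (∫ x in (t k)..(t (k+1)), ((c - ρ (k+1) x) * v x + v' x ^ 2))
        = v' (t (k+1)) * v (t (k+1)) - v' (t k) * v (t k) :=
      intervalIntegral.integral_eq_sub_of_hasDeriv_right_of_le hpq.le hGc
        (fun x hx => (hder x hx).hasDerivWithinAt) hEi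
    have hvi : IntervalIntegrable v volume (t k) (t (k+1)) :=
      ContinuousOn.intervalIntegrable (by rw [hu]; exact hvab)
    have hρvi : IntervalIntegrable (fun x => ρ (k+1) x * v x) volume (t k) (t (k+1)) :=
      ContinuousOn.intervalIntegrable (by rw [hu]; exact hρab.mul hvab)
    have hv'2i : IntervalIntegrable (fun x => v' x ^ 2) volume (t k) (t (k+1)) :=
      ContinuousOn.intervalIntegrable (by rw [hu]; exact hv'ab.pow 2)
    have hsplit : (∫ x in (t k)..(t (k+1)), ((c - ρ (k+1) x) * v x + v' x ^ 2))
        = c * (∫ x in (t k)..(t (k+1)), v x)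
          - (∫ x in (t k)..(t (k+1)), ρ (k+1) x * v x)
          + ∫ x in (t k)..(t (k+1)), v' x ^ 2 := by
      have hexp : ∀ x, (c - ρ (k+1) x) * v x + v' x ^ 2
          = c * v x - ρ (k+1) x * v x + v' x ^ 2 := fun x => by ring
      simp only [hexp]
      rw [intervalIntegral.integral_add ((hvi.const_mul c).sub hρvi) hv'2i,
        intervalIntegral.integral_sub (hvi.const_mul c) hρvi,
        intervalIntegral.integral_const_mul]
    have hmv : c * (∫ x in (t k)..(t (k+1)), v x)
        = (t (k+1) - t k) * (cellMean t (k+1) w * cellMean t (k+1) v ^ 2) := by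
      rw [hcdef, cellMean_succ, cellMean_succ]
      field_simp
    rw [hsplit, hmv] at hftc
    linarith [hftc]
  -- sum the identity
  have hv'2i : ∀ k < N, IntervalIntegrable (fun x => v' x ^ 2) volume (t k) (t (k+1)) := by
    intro k hk
    obtain ⟨hp0, hpq, hq1⟩ := pf k hk
    exact ContinuousOn.intervalIntegrable
      (by rw [Set.uIcc_of_le hpq.le]
          exact (hv'c.mono (Set.Icc_subset_Icc hp0 hq1)).pow 2)
  have hv2i : ∀ k < N, IntervalIntegrable (fun x => v x ^ 2) volume (t k) (t (k+1)) := by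
    intro k hk
    obtain ⟨hp0, hpq, hq1⟩ := pf k hk
    exact ContinuousOn.intervalIntegrable
      (by rw [Set.uIcc_of_le hpq.le]
          exact (hvc.mono (Set.Icc_subset_Icc hp0 hq1)).pow 2)
  have hsumv' : ∑ k ∈ Finset.range N, (∫ x in (t k)..(t (k+1)), v' x ^ 2)
      = ∫ x in (0:ℝ)..1, v' x ^ 2 := by
    rw [intervalIntegral.sum_integral_adjacent_intervals hv'2i, ht0, htN]
  have hsumv2 : ∑ k ∈ Finset.range N, (∫ x in (t k)..(t (k+1)), v x ^ 2)
      = ∫ x in (0:ℝ)..1, v x ^ 2 := by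
    rw [intervalIntegral.sum_integral_adjacent_intervals hv2i, ht0, htN]
  have htel : ∑ k ∈ Finset.range N,
      (v' (t (k+1)) * v (t (k+1)) - v' (t k) * v (t k)) = 0 := by
    rw [Finset.sum_range_sub (fun k => v' (t k) * v (t k)), ht0, htN, hv0, hv1]
    ring
  have energy : (∫ x in (0:ℝ)..1, v' x ^ 2)
      = (∑ k ∈ Finset.range N, ∫ x in (t k)..(t (k+1)), ρ (k+1) x * v x)
        - ∑ k ∈ Finset.range N,
            (t (k+1) - t k) * (cellMean t (k+1) w * cellMean t (k+1) v ^ 2) := by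
    rw [← hsumv']
    rw [Finset.sum_congr rfl (fun k hk => hcell k (Finset.mem_range.mp hk))]
    rw [Finset.sum_sub_distrib, Finset.sum_add_distrib, htel]
    ring
  -- coercivity: each cell term ≥ -M * ∫ v^2
  have hcoer : ∀ k < N,
      -(max |wl| |wu|) * (∫ x in (t k)..(t (k+1)), v x ^ 2)
        ≤ (t (k+1) - t k) * (cellMean t (k+1) w * cellMean t (k+1) v ^ 2) := by
    intro k hk
    obtain ⟨hp0, hpq, hq1⟩ := pf k hk
    have hd0 : (0:ℝ) < t (k+1) - t k := by linarith
    have hsub : Set.Icc (t k) (t (k+1)) ⊆ Set.Icc (0:ℝ) 1 := Set.Icc_subset_Icc hp0 hq1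
    have hu : Set.uIcc (t k) (t (k+1)) = Set.Icc (t k) (t (k+1)) := Set.uIcc_of_le hpq.le
    -- bound on mean of w
    have hwae : ∀ᵐ x ∂(volume.restrict (Set.Icc (t k) (t (k+1)))), wl ≤ w x ∧ w x ≤ wu := by
      rw [ae_restrict_iff' measurableSet_Icc]
      rw [ae_restrict_iff' measurableSet_Ioo] at hwb
      have h0 : ∀ᵐ x : ℝ, x ≠ 0 := by simp only [ae_iff, not_not]; exact measure_singleton 0
      have h1 : ∀ᵐ x : ℝ, x ≠ 1 := by simp only [ae_iff, not_not]; exact measure_singleton 1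
      filter_upwards [hwb, h0, h1] with x hx hx0 hx1 hmem
      exact hx ⟨lt_of_le_of_ne (le_trans hp0 hmem.1) (Ne.symm hx0),
        lt_of_le_of_ne (le_trans hmem.2 hq1) hx1⟩
    have hwi : IntervalIntegrable w volume (t k) (t (k+1)) := by
      apply integrable_cell hwm (B := max |wl| |wu|) _ hp0 hq1 hpq.le
      filter_upwards [hwb] with x hx
      rw [abs_le]
      constructor
      · calc -(max |wl| |wu|) ≤ -|wl| := by simp
          _ ≤ wl := neg_abs_le wl
          _ ≤ w x := hx.1
      · calc w x ≤ wu := hx.2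
          _ ≤ |wu| := le_abs_self wu
          _ ≤ max |wl| |wu| := le_max_right _ _
    have hwl : wl * (t (k+1) - t k) ≤ ∫ x in (t k)..(t (k+1)), w x := by
      have h := intervalIntegral.integral_mono_ae_restrict (μ := volume)
        (f := fun _ => wl) (g := w) hpq.le intervalIntegrable_const hwi
        (by filter_upwards [hwae] with x hx; exact hx.1)
      rw [intervalIntegral.integral_const, smul_eq_mul] at h
      linarith [h]
    have hwu : (∫ x in (t k)..(t (k+1)), w x) ≤ wu * (t (k+1) - t k) := by
      have h := intervalIntegral.integral_mono_ae_restrict (μ := volume)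
        (f := w) (g := fun _ => wu) hpq.le hwi intervalIntegrable_const
        (by filter_upwards [hwae] with x hx; exact hx.2)
      rw [intervalIntegral.integral_const, smul_eq_mul] at h
      linarith [h]
    have hmw : -(max |wl| |wu|) ≤ cellMean t (k+1) w := by
      rw [cellMean_succ]
      have h1 : wl ≤ (t (k+1) - t k)⁻¹ * ∫ x in (t k)..(t (k+1)), w x := by
        rw [le_inv_mul_iff₀ hd0, mul_comm]
        exact hwl
      calc -(max |wl| |wu|) ≤ -|wl| := by simp
        _ ≤ wl := neg_abs_le wl
        _ ≤ _ := h1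
    -- Jensen: (q-p) * mean^2 ≤ ∫ v^2
    have hvab : ContinuousOn v (Set.Icc (t k) (t (k+1))) := hvc.mono hsub
    have hjen : (t (k+1) - t k) * cellMean t (k+1) v ^ 2
        ≤ ∫ x in (t k)..(t (k+1)), v x ^ 2 := by
      have hs1 : (∫ x in (t k)..(t (k+1)), v x * 1)
          ≤ Real.sqrt (∫ x in (t k)..(t (k+1)), v x ^ 2)
            * Real.sqrt (∫ x in (t k)..(t (k+1)), (1:ℝ) ^ 2) :=
        cs_interval hpq.le hvab continuousOn_const
      have hs2 : (∫ x in (t k)..(t (k+1)), (-(v x)) * 1)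
          ≤ Real.sqrt (∫ x in (t k)..(t (k+1)), (-(v x)) ^ 2)
            * Real.sqrt (∫ x in (t k)..(t (k+1)), (1:ℝ) ^ 2) :=
        cs_interval hpq.le hvab.neg continuousOn_const
      have he1 : ∀ x : ℝ, v x * 1 = v x := fun x => by ring
      have he2 : ∀ x : ℝ, (-(v x)) * 1 = -(v x) := fun x => by ring
      have he3 : ∀ x : ℝ, (-(v x)) ^ 2 = v x ^ 2 := fun x => by ring
      simp only [he1, he2, he3] at hs1 hs2
      rw [intervalIntegral.integral_neg] at hs2
      have hone : (∫ x in (t k)..(t (k+1)), (1:ℝ) ^ 2) = t (k+1) - t k := by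
        simp only [one_pow]
        rw [intervalIntegral.integral_const, smul_eq_mul, mul_one]
      rw [hone] at hs1 hs2
      have hv2nn : 0 ≤ ∫ x in (t k)..(t (k+1)), v x ^ 2 :=
        intervalIntegral.integral_nonneg hpq.le (fun x _ => sq_nonneg _)
      have hsq : (∫ x in (t k)..(t (k+1)), v x) ^ 2
          ≤ (∫ x in (t k)..(t (k+1)), v x ^ 2) * (t (k+1) - t k) := by
        have hr : (Real.sqrt (∫ x in (t k)..(t (k+1)), v x ^ 2)
              * Real.sqrt (t (k+1) - t k)) ^ 2
            = (∫ x in (t k)..(t (k+1)), v x ^ 2) * (t (k+1) - t k) := by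
          rw [mul_pow, Real.sq_sqrt hv2nn, Real.sq_sqrt hd0.le]
        nlinarith [hs1, hs2, Real.sqrt_nonneg (∫ x in (t k)..(t (k+1)), v x ^ 2),
          Real.sqrt_nonneg (t (k+1) - t k)]
      rw [cellMean_succ]
      have heq : (t (k+1) - t k) * ((t (k+1) - t k)⁻¹ * ∫ x in (t k)..(t (k+1)), v x) ^ 2
          = (∫ x in (t k)..(t (k+1)), v x) ^ 2 * (t (k+1) - t k)⁻¹ := by
        field_simp
      rw [heq]
      have hsq2 := (div_le_iff₀ hd0).mpr hsq
      rw [div_eq_mul_inv] at hsq2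
      exact hsq2
    -- combine
    have hnn : 0 ≤ (t (k+1) - t k) * cellMean t (k+1) v ^ 2 := by positivity
    calc -(max |wl| |wu|) * (∫ x in (t k)..(t (k+1)), v x ^ 2)
        ≤ -(max |wl| |wu|) * ((t (k+1) - t k) * cellMean t (k+1) v ^ 2) := by
          apply mul_le_mul_of_nonpos_left hjen
          simp [hM0]
      _ ≤ cellMean t (k+1) w * ((t (k+1) - t k) * cellMean t (k+1) v ^ 2) :=
          mul_le_mul_of_nonneg_right hmw hnn
      _ = (t (k+1) - t k) * (cellMean t (k+1) w * cellMean t (k+1) v ^ 2) := by ring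
  -- sum coercivity, Poincare, conclude
  have hsumco : -(max |wl| |wu|) * (∫ x in (0:ℝ)..1, v x ^ 2)
      ≤ ∑ k ∈ Finset.range N,
          (t (k+1) - t k) * (cellMean t (k+1) w * cellMean t (k+1) v ^ 2) := by
    calc -(max |wl| |wu|) * (∫ x in (0:ℝ)..1, v x ^ 2)
        = ∑ k ∈ Finset.range N,
            -(max |wl| |wu|) * (∫ x in (t k)..(t (k+1)), v x ^ 2) := by
          rw [← Finset.mul_sum, hsumv2]
      _ ≤ _ := Finset.sum_le_sum (fun k hk => hcoer k (Finset.mem_range.mp hk))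
  have hpoin := poincare_s17 hv hv'c hv0 hv1
  have hv'nn : 0 ≤ ∫ x in (0:ℝ)..1, v' x ^ 2 :=
    intervalIntegral.integral_nonneg zero_le_one (fun x _ => sq_nonneg _)
  have hπ2 : (0:ℝ) < π ^ 2 := by positivity
  have hMp : max |wl| |wu| * (∫ x in (0:ℝ)..1, v x ^ 2)
      ≤ max |wl| |wu| / π ^ 2 * (∫ x in (0:ℝ)..1, v' x ^ 2) := by
    have h := mul_le_mul_of_nonneg_left hpoin (div_nonneg hM0 hπ2.le)
    calc max |wl| |wu| * (∫ x in (0:ℝ)..1, v x ^ 2)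
        = max |wl| |wu| / π ^ 2 * (π ^ 2 * ∫ x in (0:ℝ)..1, v x ^ 2) := by
          field_simp
      _ ≤ _ := h
  calc (1 - max |wl| |wu| / π ^ 2) * (∫ x in (0:ℝ)..1, v' x ^ 2)
      = (∫ x in (0:ℝ)..1, v' x ^ 2)
        - max |wl| |wu| / π ^ 2 * (∫ x in (0:ℝ)..1, v' x ^ 2) := by ring
    _ ≤ (∫ x in (0:ℝ)..1, v' x ^ 2)
        - max |wl| |wu| * (∫ x in (0:ℝ)..1, v x ^ 2) := by linarith [hMp]
    _ ≤ ∑ k ∈ Finset.range N, ∫ x in (t k)..(t (k+1)), ρ (k+1) x * v x := by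
        rw [energy]
        linarith [hsumco]

lemma poincare_sqrt {v v' : ℝ → ℝ}
    (hv : ∀ x ∈ Set.Icc (0:ℝ) 1, HasDerivAt v (v' x) x)
    (hv'c : ContinuousOn v' (Set.Icc 0 1)) (hv0 : v 0 = 0) (hv1 : v 1 = 0) :
    π * Real.sqrt (∫ x in (0:ℝ)..1, v x ^ 2)
      ≤ Real.sqrt (∫ x in (0:ℝ)..1, v' x ^ 2) := by
  have hπ := Real.pi_pos
  have hp := poincare_s17 hv hv'c hv0 hv1
  have h := Real.sqrt_le_sqrt hp
  rwa [Real.sqrt_mul (by positivity) , Real.sqrt_sq hπ.le] at h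

end helpers

set_option maxHeartbeats 1000000 in
theorem second_derivative_bound
    (N : ℕ) (hN : 1 ≤ N) (t : ℕ → ℝ)
    (ht0 : t 0 = 0) (htN : t N = 1) (hmono : ∀ i < N, t i < t (i + 1))
    (f : ℝ → ℝ) (hfc : ContinuousOn f (Set.Icc 0 1))
    (wl wu : ℝ) (hwlu : wl ≤ wu) (hMpi : max |wl| |wu| < π ^ 2)
    (w φ ψ : ℝ → ℝ)
    (hwm : Measurable w) (hφm : Measurable φ) (hψm : Measurable ψ)
    (hwb : ∀ᵐ x ∂(volume.restrict (Set.Ioo (0:ℝ) 1)), wl ≤ w x ∧ w x ≤ wu)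
    (hφb : ∀ᵐ x ∂(volume.restrict (Set.Ioo (0:ℝ) 1)), |φ x| ≤ wu - wl)
    (hψb : ∀ᵐ x ∂(volume.restrict (Set.Ioo (0:ℝ) 1)), |ψ x| ≤ wu - wl)
    (u u' u'' qφ qφ' qφ'' qψ qψ' qψ'' ξ ξ' ξ'' : ℝ → ℝ)
    (hu : ∀ x ∈ Set.Icc (0:ℝ) 1, HasDerivAt u (u' x) x)
    (hu'c : ContinuousOn u' (Set.Icc 0 1))
    (hu0 : u 0 = 0) (hu1 : u 1 = 0)
    (hode : ∀ j ∈ Finset.Icc 1 N, ∀ x ∈ Set.Ioo (t (j - 1)) (t j),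
      HasDerivAt u' (u'' x) x ∧
      -u'' x + cellMean t j w * cellMean t j u = f x)
    (hqφ : ∀ x ∈ Set.Icc (0:ℝ) 1, HasDerivAt qφ (qφ' x) x)
    (hqφ'c : ContinuousOn qφ' (Set.Icc 0 1))
    (hqφ0 : qφ 0 = 0) (hqφ1 : qφ 1 = 0)
    (hodeqφ : ∀ j ∈ Finset.Icc 1 N, ∀ x ∈ Set.Ioo (t (j - 1)) (t j),
      HasDerivAt qφ' (qφ'' x) x ∧
      -qφ'' x + cellMean t j w * cellMean t j qφ = -(cellMean t j u * cellMean t j φ))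
    (hqψ : ∀ x ∈ Set.Icc (0:ℝ) 1, HasDerivAt qψ (qψ' x) x)
    (hqψ'c : ContinuousOn qψ' (Set.Icc 0 1))
    (hqψ0 : qψ 0 = 0) (hqψ1 : qψ 1 = 0)
    (hodeqψ : ∀ j ∈ Finset.Icc 1 N, ∀ x ∈ Set.Ioo (t (j - 1)) (t j),
      HasDerivAt qψ' (qψ'' x) x ∧
      -qψ'' x + cellMean t j w * cellMean t j qψ = -(cellMean t j u * cellMean t j ψ))
    (hξ : ∀ x ∈ Set.Icc (0:ℝ) 1, HasDerivAt ξ (ξ' x) x)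
    (hξ'c : ContinuousOn ξ' (Set.Icc 0 1))
    (hξ0 : ξ 0 = 0) (hξ1 : ξ 1 = 0)
    (hodeξ : ∀ j ∈ Finset.Icc 1 N, ∀ x ∈ Set.Ioo (t (j - 1)) (t j),
      HasDerivAt ξ' (ξ'' x) x ∧
      -ξ'' x + cellMean t j w * cellMean t j ξ =
        -(cellMean t j qφ * cellMean t j ψ) - cellMean t j qψ * cellMean t j φ) :
    Real.sqrt (∫ x in (0:ℝ)..1, ξ x ^ 2) ≤
      (Real.sqrt (∫ x in (0:ℝ)..1, f x ^ 2) /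
          (2 * π * (1 - max |wl| |wu| / π ^ 2) ^ 3)) *
        ((∫ x in (0:ℝ)..1, |ψ x|) * ∫ x in (0:ℝ)..1, |φ x|) := by
  have hπ := Real.pi_pos
  have hπ2 : (0:ℝ) < π ^ 2 := by positivity
  have hc2 : (0:ℝ) < 1 - max |wl| |wu| / π ^ 2 := by
    have := (div_lt_one hπ2).mpr hMpi
    linarith
  have pf := part_facts N t ht0 htN hmono
  have hmem : ∀ k, k < N → (k + 1) ∈ Finset.Icc 1 N :=
    fun k hk => Finset.mem_Icc.mpr ⟨by omega, by omega⟩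
  have huc : ContinuousOn u (Set.Icc 0 1) :=
    fun x hx => (hu x hx).continuousAt.continuousWithinAt
  have hqφc : ContinuousOn qφ (Set.Icc 0 1) :=
    fun x hx => (hqφ x hx).continuousAt.continuousWithinAt
  have hqψc : ContinuousOn qψ (Set.Icc 0 1) :=
    fun x hx => (hqψ x hx).continuousAt.continuousWithinAt
  have hξc : ContinuousOn ξ (Set.Icc 0 1) :=
    fun x hx => (hξ x hx).continuousAt.continuousWithinAt
  -- abbreviations (opaque, to keep linarith atoms stable)
  obtain ⟨c2, hc2def⟩ : ∃ c : ℝ, c = 1 - max |wl| |wu| / π ^ 2 := ⟨_, rfl⟩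
  obtain ⟨F, hFdef⟩ : ∃ c : ℝ, c = Real.sqrt (∫ x in (0:ℝ)..1, f x ^ 2) := ⟨_, rfl⟩
  obtain ⟨Φ, hΦdef⟩ : ∃ c : ℝ, c = ∫ x in (0:ℝ)..1, |φ x| := ⟨_, rfl⟩
  obtain ⟨Ψ, hΨdef⟩ : ∃ c : ℝ, c = ∫ x in (0:ℝ)..1, |ψ x| := ⟨_, rfl⟩
  obtain ⟨au, haudef⟩ : ∃ c : ℝ, c = Real.sqrt (∫ x in (0:ℝ)..1, u' x ^ 2) := ⟨_, rfl⟩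
  obtain ⟨aφ, haφdef⟩ : ∃ c : ℝ, c = Real.sqrt (∫ x in (0:ℝ)..1, qφ' x ^ 2) := ⟨_, rfl⟩
  obtain ⟨aψ, haψdef⟩ : ∃ c : ℝ, c = Real.sqrt (∫ x in (0:ℝ)..1, qψ' x ^ 2) := ⟨_, rfl⟩
  obtain ⟨aξ, haξdef⟩ : ∃ c : ℝ, c = Real.sqrt (∫ x in (0:ℝ)..1, ξ' x ^ 2) := ⟨_, rfl⟩
  rw [← hFdef, ← hΨdef, ← hΦdef, ← hc2def]
  rw [← hc2def] at hc2
  have hF0 : 0 ≤ F := by rw [hFdef]; exact Real.sqrt_nonneg _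
  have hΦ0 : 0 ≤ Φ := by
    rw [hΦdef]
    exact intervalIntegral.integral_nonneg zero_le_one (fun x _ => abs_nonneg _)
  have hΨ0 : 0 ≤ Ψ := by
    rw [hΨdef]
    exact intervalIntegral.integral_nonneg zero_le_one (fun x _ => abs_nonneg _)
  have hau0 : 0 ≤ au := by rw [haudef]; exact Real.sqrt_nonneg _
  have haφ0 : 0 ≤ aφ := by rw [haφdef]; exact Real.sqrt_nonneg _
  have haψ0 : 0 ≤ aψ := by rw [haψdef]; exact Real.sqrt_nonneg _
  have haξ0 : 0 ≤ aξ := by rw [haξdef]; exact Real.sqrt_nonneg _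
  have hAu : (∫ x in (0:ℝ)..1, u' x ^ 2) = au ^ 2 := by
    rw [haudef]
    exact (Real.sq_sqrt (intervalIntegral.integral_nonneg zero_le_one
      (fun x _ => sq_nonneg _))).symm
  have hAφ : (∫ x in (0:ℝ)..1, qφ' x ^ 2) = aφ ^ 2 := by
    rw [haφdef]
    exact (Real.sq_sqrt (intervalIntegral.integral_nonneg zero_le_one
      (fun x _ => sq_nonneg _))).symm
  have hAψ : (∫ x in (0:ℝ)..1, qψ' x ^ 2) = aψ ^ 2 := by
    rw [haψdef]
    exact (Real.sq_sqrt (intervalIntegral.integral_nonneg zero_le_one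
      (fun x _ => sq_nonneg _))).symm
  have hAξ : (∫ x in (0:ℝ)..1, ξ' x ^ 2) = aξ ^ 2 := by
    rw [haξdef]
    exact (Real.sq_sqrt (intervalIntegral.integral_nonneg zero_le_one
      (fun x _ => sq_nonneg _))).symm
  have hsupu : ∀ x ∈ Set.Icc (0:ℝ) 1, |u x| ≤ au / 2 := by
    intro x hx; have h := sup_bound hu hu'c hu0 hu1 x hx; rw [← haudef] at h; linarith
  have hsupφ : ∀ x ∈ Set.Icc (0:ℝ) 1, |qφ x| ≤ aφ / 2 := by
    intro x hx; have h := sup_bound hqφ hqφ'c hqφ0 hqφ1 x hx; rw [← haφdef] at h; linarith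
  have hsupψ : ∀ x ∈ Set.Icc (0:ℝ) 1, |qψ x| ≤ aψ / 2 := by
    intro x hx; have h := sup_bound hqψ hqψ'c hqψ0 hqψ1 x hx; rw [← haψdef] at h; linarith
  have hsupξ : ∀ x ∈ Set.Icc (0:ℝ) 1, |ξ x| ≤ aξ / 2 := by
    intro x hx; have h := sup_bound hξ hξ'c hξ0 hξ1 x hx; rw [← haξdef] at h; linarith
  -- integrability of φ, ψ on cells
  have hφi : ∀ k < N, IntervalIntegrable φ volume (t k) (t (k+1)) := by
    intro k hk
    obtain ⟨hp0, hpq, hq1⟩ := pf k hk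
    exact integrable_cell hφm hφb hp0 hq1 hpq.le
  have hψi : ∀ k < N, IntervalIntegrable ψ volume (t k) (t (k+1)) := by
    intro k hk
    obtain ⟨hp0, hpq, hq1⟩ := pf k hk
    exact integrable_cell hψm hψb hp0 hq1 hpq.le
  -- STEP u
  have hkeyu := apriori N t ht0 htN hmono wl wu hMpi w hwm hwb u u' u'' hu hu'c hu0 hu1
    (fun _ x => f x)
    (fun k hk => by
      obtain ⟨hp0, hpq, hq1⟩ := pf k hk
      exact hfc.mono (Set.Icc_subset_Icc hp0 hq1))
    (fun k hk x hx => hode (k+1) (hmem k hk) x hx)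
  rw [← hc2def] at hkeyu
  have hsumu : (∑ k ∈ Finset.range N, ∫ x in (t k)..(t (k+1)), f x * u x)
      = ∫ x in (0:ℝ)..1, f x * u x := by
    rw [intervalIntegral.sum_integral_adjacent_intervals (fun k hk => by
      obtain ⟨hp0, hpq, hq1⟩ := pf k hk
      exact ContinuousOn.intervalIntegrable (by
        rw [Set.uIcc_of_le hpq.le]
        exact (hfc.mul huc).mono (Set.Icc_subset_Icc hp0 hq1))), ht0, htN]
  have hcsu : (∫ x in (0:ℝ)..1, f x * u x)
      ≤ F * Real.sqrt (∫ x in (0:ℝ)..1, u x ^ 2) := by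
    rw [hFdef]; exact cs_interval zero_le_one hfc huc
  have hpu : π * Real.sqrt (∫ x in (0:ℝ)..1, u x ^ 2) ≤ au := by
    rw [haudef]; exact poincare_sqrt hu hu'c hu0 hu1
  have hau : π * c2 * au ≤ F := by
    have h1 : c2 * au ^ 2 ≤ F * Real.sqrt (∫ x in (0:ℝ)..1, u x ^ 2) := by
      rw [← hAu]; rw [hsumu] at hkeyu; linarith [hkeyu, hcsu]
    have h2 := mul_le_mul_of_nonneg_left h1 hπ.le
    have h3 := mul_le_mul_of_nonneg_left hpu hF0
    rcases eq_or_lt_of_le hau0 with h0 | h0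
    · rw [← h0]; simpa using hF0
    · have h4 : (π * c2 * au) * au ≤ F * au := by linarith [h2, h3]
      exact le_of_mul_le_mul_right h4 h0
  -- STEP qφ
  have hkeyφ := apriori N t ht0 htN hmono wl wu hMpi w hwm hwb qφ qφ' qφ'' hqφ hqφ'c hqφ0 hqφ1
    (fun j _ => -(cellMean t j u * cellMean t j φ))
    (fun k hk => continuousOn_const)
    (fun k hk x hx => hodeqφ (k+1) (hmem k hk) x hx)
  rw [← hc2def] at hkeyφ
  have hsumφ : (∑ k ∈ Finset.range N, ∫ x in (t k)..(t (k+1)),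
        (-(cellMean t (k+1) u * cellMean t (k+1) φ)) * qφ x)
      ≤ (au/2) * (aφ/2) * Φ := by
    rw [hΦdef]
    have hre : ∀ k ∈ Finset.range N,
        (∫ x in (t k)..(t (k+1)), (-(cellMean t (k+1) u * cellMean t (k+1) φ)) * qφ x)
        = (-(cellMean t (k+1) u * cellMean t (k+1) φ))
            * ∫ x in (t k)..(t (k+1)), qφ x :=
      fun k _ => intervalIntegral.integral_const_mul _ _
    rw [Finset.sum_congr rfl hre]
    exact sum_term_bound N t ht0 htN hmono u φ qφ (au/2) (aφ/2)
      (by linarith) (by linarith) huc hqφc hφi hsupu hsupφ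
  have haφb : 4 * c2 * aφ ≤ au * Φ := by
    have h1 : c2 * aφ ^ 2 ≤ (au/2) * (aφ/2) * Φ := by
      rw [← hAφ]; exact hkeyφ.trans hsumφ
    rcases eq_or_lt_of_le haφ0 with h0 | h0
    · rw [← h0]; simpa using mul_nonneg hau0 hΦ0
    · have h4 : (4 * c2 * aφ) * aφ ≤ (au * Φ) * aφ := by linarith [h1]
      exact le_of_mul_le_mul_right h4 h0
  -- STEP qψ
  have hkeyψ := apriori N t ht0 htN hmono wl wu hMpi w hwm hwb qψ qψ' qψ'' hqψ hqψ'c hqψ0 hqψ1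
    (fun j _ => -(cellMean t j u * cellMean t j ψ))
    (fun k hk => continuousOn_const)
    (fun k hk x hx => hodeqψ (k+1) (hmem k hk) x hx)
  rw [← hc2def] at hkeyψ
  have hsumψ : (∑ k ∈ Finset.range N, ∫ x in (t k)..(t (k+1)),
        (-(cellMean t (k+1) u * cellMean t (k+1) ψ)) * qψ x)
      ≤ (au/2) * (aψ/2) * Ψ := by
    rw [hΨdef]
    have hre : ∀ k ∈ Finset.range N,
        (∫ x in (t k)..(t (k+1)), (-(cellMean t (k+1) u * cellMean t (k+1) ψ)) * qψ x)
        = (-(cellMean t (k+1) u * cellMean t (k+1) ψ))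
            * ∫ x in (t k)..(t (k+1)), qψ x :=
      fun k _ => intervalIntegral.integral_const_mul _ _
    rw [Finset.sum_congr rfl hre]
    exact sum_term_bound N t ht0 htN hmono u ψ qψ (au/2) (aψ/2)
      (by linarith) (by linarith) huc hqψc hψi hsupu hsupψ
  have haψb : 4 * c2 * aψ ≤ au * Ψ := by
    have h1 : c2 * aψ ^ 2 ≤ (au/2) * (aψ/2) * Ψ := by
      rw [← hAψ]; exact hkeyψ.trans hsumψ
    rcases eq_or_lt_of_le haψ0 with h0 | h0
    · rw [← h0]; simpa using mul_nonneg hau0 hΨ0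
    · have h4 : (4 * c2 * aψ) * aψ ≤ (au * Ψ) * aψ := by linarith [h1]
      exact le_of_mul_le_mul_right h4 h0
  -- STEP ξ
  have hkeyξ := apriori N t ht0 htN hmono wl wu hMpi w hwm hwb ξ ξ' ξ'' hξ hξ'c hξ0 hξ1
    (fun j _ => -(cellMean t j qφ * cellMean t j ψ) - cellMean t j qψ * cellMean t j φ)
    (fun k hk => continuousOn_const)
    (fun k hk x hx => hodeξ (k+1) (hmem k hk) x hx)
  rw [← hc2def] at hkeyξ
  have hsumξ : (∑ k ∈ Finset.range N, ∫ x in (t k)..(t (k+1)),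
        (-(cellMean t (k+1) qφ * cellMean t (k+1) ψ)
          - cellMean t (k+1) qψ * cellMean t (k+1) φ) * ξ x)
      ≤ (aφ/2) * (aξ/2) * Ψ + (aψ/2) * (aξ/2) * Φ := by
    rw [hΨdef, hΦdef]
    have hre : ∀ k ∈ Finset.range N,
        (∫ x in (t k)..(t (k+1)),
          (-(cellMean t (k+1) qφ * cellMean t (k+1) ψ)
            - cellMean t (k+1) qψ * cellMean t (k+1) φ) * ξ x)
        = (-(cellMean t (k+1) qφ * cellMean t (k+1) ψ)) * (∫ x in (t k)..(t (k+1)), ξ x)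
          + (-(cellMean t (k+1) qψ * cellMean t (k+1) φ))
              * (∫ x in (t k)..(t (k+1)), ξ x) := by
      intro k _
      rw [intervalIntegral.integral_const_mul]
      ring
    rw [Finset.sum_congr rfl hre, Finset.sum_add_distrib]
    have b1 := sum_term_bound N t ht0 htN hmono qφ ψ ξ (aφ/2) (aξ/2)
      (by linarith) (by linarith) hqφc hξc hψi hsupφ hsupξ
    have b2 := sum_term_bound N t ht0 htN hmono qψ φ ξ (aψ/2) (aξ/2)
      (by linarith) (by linarith) hqψc hξc hφi hsupψ hsupξ
    exact add_le_add b1 b2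
  have haξb : 4 * c2 * aξ ≤ aφ * Ψ + aψ * Φ := by
    have h1 : c2 * aξ ^ 2 ≤ (aφ/2) * (aξ/2) * Ψ + (aψ/2) * (aξ/2) * Φ := by
      rw [← hAξ]; exact hkeyξ.trans hsumξ
    rcases eq_or_lt_of_le haξ0 with h0 | h0
    · rw [← h0]
      have := add_nonneg (mul_nonneg haφ0 hΨ0) (mul_nonneg haψ0 hΦ0)
      simpa using this
    · have h4 : (4 * c2 * aξ) * aξ ≤ (aφ * Ψ + aψ * Φ) * aξ := by linarith [h1]
      exact le_of_mul_le_mul_right h4 h0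
  -- final combination
  have hpξ : π * Real.sqrt (∫ x in (0:ℝ)..1, ξ x ^ 2) ≤ aξ := by
    rw [haξdef]; exact poincare_sqrt hξ hξ'c hξ0 hξ1
  have hXnn : 0 ≤ Real.sqrt (∫ x in (0:ℝ)..1, ξ x ^ 2) := Real.sqrt_nonneg _
  have e1 : (4 * c2 * aφ) * Ψ ≤ (au * Φ) * Ψ := mul_le_mul_of_nonneg_right haφb hΨ0
  have e2 : (4 * c2 * aψ) * Φ ≤ (au * Ψ) * Φ := mul_le_mul_of_nonneg_right haψb hΦ0
  have e3 : (4 * c2) * (4 * c2 * aξ) ≤ (4 * c2) * (aφ * Ψ + aψ * Φ) :=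
    mul_le_mul_of_nonneg_left haξb (by linarith)
  have h16 : 16 * c2 ^ 2 * aξ ≤ 2 * au * Φ * Ψ := by linarith [e1, e2, e3]
  have hπc2 : (0:ℝ) < π * c2 := mul_pos hπ hc2
  have h5 := mul_le_mul_of_nonneg_left h16 hπc2.le
  have h6 : (π * c2 * au) * (Φ * Ψ) ≤ F * (Φ * Ψ) :=
    mul_le_mul_of_nonneg_right hau (mul_nonneg hΦ0 hΨ0)
  have h7 : 16 * π * c2 ^ 3 * aξ ≤ 2 * F * Φ * Ψ := by linarith [h5, h6]
  have g1 := mul_le_mul_of_nonneg_left hpξ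
    (show (0:ℝ) ≤ 16 * π * c2 ^ 3 by
      have := mul_pos (mul_pos (show (0:ℝ) < 16 by norm_num) hπ) (pow_pos hc2 3)
      linarith)
  have g2 : 16 * π ^ 2 * c2 ^ 3 * Real.sqrt (∫ x in (0:ℝ)..1, ξ x ^ 2)
      ≤ 2 * F * Φ * Ψ := by linarith [g1, h7]
  have g3 : 2 * π ≤ 8 * π ^ 2 := by
    have h := Real.pi_gt_three
    have h9 : (0:ℝ) ≤ 2 * π * (4 * π - 1) := mul_nonneg (by linarith) (by linarith)
    linarith [h9]
  have g4 : (2 * π * c2 ^ 3) * Real.sqrt (∫ x in (0:ℝ)..1, ξ x ^ 2)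
      ≤ (8 * π ^ 2 * c2 ^ 3) * Real.sqrt (∫ x in (0:ℝ)..1, ξ x ^ 2) := by
    have h10 : (2 * π) * c2 ^ 3 ≤ (8 * π ^ 2) * c2 ^ 3 :=
      mul_le_mul_of_nonneg_right g3 (pow_pos hc2 3).le
    have := mul_le_mul_of_nonneg_right h10 hXnn
    linarith [this]
  have hden : (0:ℝ) < 2 * π * c2 ^ 3 :=
    mul_pos (mul_pos (by norm_num) hπ) (pow_pos hc2 3)
  rw [div_mul_eq_mul_div, le_div_iff₀ hden]
  linarith [g2, g4]
end
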